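/- arXiv:0901.3697 — 4 statements merged into one kernel-verified Lean document; each statement's English description precedes it below -/
import Mathlib

section
/- Let X be a random variable with a logconcave density f : ℝ → ℝ≥0. Then P(X ≥ E[X]) ≥ 1/e. -/
open MeasureTheory Set

lemma four_point_lemma (f : ℝ → ℝ) (hf_nonneg : ∀ x, 0 ≤ f x)
    (hf_logconcave : ∀ x y l : ℝ, 0 ≤ l → l ≤ 1 →
      f x ^ l * f y ^ (1 - l) ≤ f (l * x + (1 - l) * y))
    {a b c d : ℝ} (hac : a ≤ c) (hcd : c ≤ d) (hdb : d ≤ b) (hsum : a + b = c + d) :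
    f a * f b ≤ f c * f d := by
  rcases eq_or_lt_of_le (hac.trans (hcd.trans hdb)) with h | hab
  · have hca : c = a := le_antisymm (by linarith) hac
    have hd : d = b := by linarith
    rw [hca, hd]
  rcases eq_or_lt_of_le (hf_nonneg a) with ha0 | ha0
  · calc f a * f b = 0 := by rw [← ha0]; ring
    _ ≤ f c * f d := mul_nonneg (hf_nonneg c) (hf_nonneg d)
  rcases eq_or_lt_of_le (hf_nonneg b) with hb0 | hb0
  · calc f a * f b = 0 := by rw [← hb0]; ring
    _ ≤ f c * f d := mul_nonneg (hf_nonneg c) (hf_nonneg d)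
  set l : ℝ := (b - c) / (b - a) with hl
  have hba : (0:ℝ) < b - a := by linarith
  have hl0 : 0 ≤ l := div_nonneg (by linarith) hba.le
  have hl1 : l ≤ 1 := by rw [div_le_one hba]; linarith
  have hc : l * a + (1 - l) * b = c := by
    have h' : l * (b - a) = b - c := by rw [hl]; exact div_mul_cancel₀ _ hba.ne'
    linarith
  have hd : (1 - l) * a + (1 - (1 - l)) * b = d := by
    have hdd : d = a + b - c := by linarith
    rw [hdd]; linarith
  have h1 := hf_logconcave a b l hl0 hl1
  have h2 := hf_logconcave a b (1 - l) (by linarith) (by linarith)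
  rw [hc] at h1
  rw [hd] at h2
  have key : (f a ^ l * f b ^ (1 - l)) * (f a ^ (1-l) * f b ^ (1 - (1-l))) = f a * f b := by
    rw [show (1 : ℝ) - (1 - l) = l by ring]
    rw [show f a ^ l * f b ^ (1 - l) * (f a ^ (1 - l) * f b ^ l)
        = (f a ^ l * f a ^ (1 - l)) * (f b ^ (1 - l) * f b ^ l) by ring]
    rw [← Real.rpow_add ha0, ← Real.rpow_add hb0]
    norm_num
  calc f a * f b = (f a ^ l * f b ^ (1 - l)) * (f a ^ (1-l) * f b ^ (1 - (1-l))) := key.symm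
  _ ≤ f c * f d := by
      apply mul_le_mul h1 h2 (mul_nonneg (Real.rpow_nonneg (hf_nonneg a) _)
        (Real.rpow_nonneg (hf_nonneg b) _)) (hf_nonneg c)

lemma tailBound (f G : ℝ → ℝ) (hf_int : Integrable f)
    (hG_meas : Measurable G)
    (hG_nonneg : ∀ t, 0 ≤ G t) (hG_le_one : ∀ t, G t ≤ 1)
    (p a : ℝ) (hp_pos : 0 < p) (ha_pos : 0 < a)
    (hGint : ∀ t ≤ (0:ℝ), G t = p + ∫ s in t..(0:ℝ), f s)
    (hfG : ∀ s ≤ (0:ℝ), f s ≤ a * G s)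
    (hf_nonneg : ∀ x, 0 ≤ f x) :
    ∀ t ≤ (0:ℝ), G t ≤ p * Real.exp (a * (-t)) := by
  have hGII : ∀ t : ℝ, t ≤ 0 → IntervalIntegrable G volume t 0 := by
    intro t ht
    rw [intervalIntegrable_iff_integrableOn_Ioc_of_le ht]
    apply Measure.integrableOn_of_bounded (by simp) hG_meas.aestronglyMeasurable
    filter_upwards with x
    rw [Real.norm_eq_abs, abs_le]
    exact ⟨by linarith [hG_nonneg x], hG_le_one x⟩
  have hpoly : ∀ (k : ℕ) (t : ℝ), ∫ s in t..(0:ℝ), (-s)^k = (-t)^(k+1)/(k+1) := by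
    intro k t
    have hderiv : ∀ s : ℝ, HasDerivAt (fun s : ℝ => -(-s)^(k+1)/(k+1)) ((-s)^k) s := by
      intro s
      have h1 : HasDerivAt (fun s : ℝ => -s) (-1) s := (hasDerivAt_id s).neg
      have h2 : HasDerivAt (fun s : ℝ => (-s)^(k+1)) ((k+1) * (-s)^k * (-1)) s :=
        (h1.pow (k+1)).congr_deriv (by push_cast; ring)
      have h3 := (h2.neg.div_const ((k:ℝ)+1))
      refine h3.congr_deriv ?_
      have hne : ((k:ℝ)+1) ≠ 0 := by positivity
      linear_combination ((-s)^k) * div_self hne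
    have hcont : Continuous (fun s : ℝ => (-s)^k) := by
      have := (continuous_pow k).comp (continuous_neg : Continuous (fun s : ℝ => -s))
      exact this
    rw [intervalIntegral.integral_eq_sub_of_hasDerivAt (fun s _ => hderiv s)
      (hcont.intervalIntegrable t 0)]
    simp only [neg_zero, zero_pow (Nat.succ_ne_zero k), zero_div, zero_sub]
    ring
  have claim : ∀ n : ℕ, ∀ t ≤ (0:ℝ), G t ≤
      p * (∑ k ∈ Finset.range n, (a * (-t))^k / (Nat.factorial k)) +
      (a * (-t))^n / (Nat.factorial n) := by
    intro n
    induction n with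
    | zero => intro t ht; simpa using hG_le_one t
    | succ n ih =>
      intro t ht
      have hbound_cont : Continuous (fun s : ℝ =>
          a * (p * (∑ k ∈ Finset.range n, (a * (-s))^k / (Nat.factorial k)) +
            (a * (-s))^n / (Nat.factorial n))) := by
        apply Continuous.mul continuous_const
        apply Continuous.add
        · apply Continuous.mul continuous_const
          apply continuous_finset_sum
          intro k _
          exact ((continuous_const.mul continuous_neg).pow k).div_const _
        · exact (((continuous_const.mul continuous_neg).pow n).div_const _)
      have step1 : G t ≤ p + ∫ s in t..(0:ℝ), a * G s := by
        rw [hGint t ht]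
        gcongr
        apply intervalIntegral.integral_mono_on ht hf_int.intervalIntegrable
          ((hGII t ht).const_mul a)
        intro s hs
        exact hfG s hs.2
      have step2 : (∫ s in t..(0:ℝ), a * G s) ≤
          ∫ s in t..(0:ℝ), a * (p * (∑ k ∈ Finset.range n, (a * (-s))^k / (Nat.factorial k)) +
            (a * (-s))^n / (Nat.factorial n)) := by
        apply intervalIntegral.integral_mono_on ht ((hGII t ht).const_mul a)
          (hbound_cont.intervalIntegrable t 0)
        intro s hs
        exact mul_le_mul_of_nonneg_left (ih s hs.2) ha_pos.le
      have step3 : (∫ s in t..(0:ℝ), a * (p * (∑ k ∈ Finset.range n, (a * (-s))^k / (Nat.factorial k)) +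
            (a * (-s))^n / (Nat.factorial n))) =
          p * (∑ k ∈ Finset.range n, (a * (-t))^(k+1) / (Nat.factorial (k+1))) +
            (a * (-t))^(n+1) / (Nat.factorial (n+1)) := by
        have expand : ∀ s : ℝ, a * (p * (∑ k ∈ Finset.range n, (a * (-s))^k / (Nat.factorial k)) +
            (a * (-s))^n / (Nat.factorial n)) =
            (∑ k ∈ Finset.range n, (p * a^(k+1) / (Nat.factorial k)) * (-s)^k) +
            (a^(n+1) / (Nat.factorial n)) * (-s)^n := by
          intro s
          rw [mul_add, ← mul_assoc, Finset.mul_sum]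
          congr 1
          · apply Finset.sum_congr rfl
            intro k _
            rw [mul_pow]
            ring
          · rw [mul_pow]; ring
        have hcont1 : ∀ k : ℕ, Continuous (fun s : ℝ => (p * a^(k+1) / (Nat.factorial k)) * (-s)^k) := by
          intro k
          have h0 : Continuous (fun s : ℝ => (-s)^k) := (continuous_pow k).comp (continuous_neg : Continuous (fun s : ℝ => -s))
          exact continuous_const.mul h0
        have hint1 : ∀ k ∈ Finset.range n, IntervalIntegrable
            (fun s : ℝ => (p * a^(k+1) / (Nat.factorial k)) * (-s)^k) volume t 0 :=
          fun k _ => (hcont1 k).intervalIntegrable t 0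
        have hcont2 : Continuous (fun s : ℝ => (a^(n+1) / (Nat.factorial n)) * (-s)^n) := by
          have h0 : Continuous (fun s : ℝ => (-s)^n) := (continuous_pow n).comp (continuous_neg : Continuous (fun s : ℝ => -s))
          exact continuous_const.mul h0
        have hterm : ∀ k : ℕ, (∫ s in t..(0:ℝ), (p * a^(k+1) / (Nat.factorial k)) * (-s)^k)
            = p * ((a * (-t))^(k+1) / (Nat.factorial (k+1))) := by
          intro k
          rw [intervalIntegral.integral_const_mul, hpoly k t, mul_pow, Nat.factorial_succ]
          have h1 : ((Nat.factorial k : ℝ)) ≠ 0 := Nat.cast_ne_zero.mpr (Nat.factorial_ne_zero k)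
          have h2 : ((k:ℝ)+1) ≠ 0 := by positivity
          push_cast
          field_simp
        have hsum_cont : Continuous (fun s : ℝ => ∑ k ∈ Finset.range n,
            (p * a^(k+1) / (Nat.factorial k)) * (-s)^k) :=
          continuous_finset_sum _ (fun k _ => hcont1 k)
        simp_rw [expand]
        rw [intervalIntegral.integral_add (hsum_cont.intervalIntegrable t 0)
            (hcont2.intervalIntegrable t 0),
          intervalIntegral.integral_finset_sum hint1]
        congr 1
        · rw [Finset.mul_sum]
          apply Finset.sum_congr rfl
          intro k _
          exact hterm k
        · rw [intervalIntegral.integral_const_mul, hpoly n t, mul_pow, Nat.factorial_succ,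
            Nat.cast_mul, Nat.cast_add, Nat.cast_one, div_mul_div_comm]
          rw [show ((n:ℝ)+1) * (Nat.factorial n : ℝ) = (Nat.factorial n : ℝ) * ((n:ℝ)+1) from mul_comm _ _]
      have reindex : p + p * (∑ k ∈ Finset.range n, (a * (-t))^(k+1) / (Nat.factorial (k+1))) =
          p * (∑ k ∈ Finset.range (n+1), (a * (-t))^k / (Nat.factorial k)) := by
        rw [Finset.sum_range_succ', mul_add]
        simp only [pow_zero, Nat.factorial_zero, Nat.cast_one, div_one, mul_one]
        ring
      calc G t ≤ p + ∫ s in t..(0:ℝ), a * G s := step1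
      _ ≤ p + (p * (∑ k ∈ Finset.range n, (a * (-t))^(k+1) / (Nat.factorial (k+1))) +
            (a * (-t))^(n+1) / (Nat.factorial (n+1))) := by
          rw [← step3]; linarith [step2]
      _ = p * (∑ k ∈ Finset.range (n+1), (a * (-t))^k / (Nat.factorial k)) +
            (a * (-t))^(n+1) / (Nat.factorial (n+1)) := by rw [← reindex]; ring
  intro t ht
  have hx : 0 ≤ a * (-t) := mul_nonneg ha_pos.le (by linarith)
  have hlim : Filter.Tendsto (fun n : ℕ => p * Real.exp (a * (-t)) + (a * (-t))^n / (Nat.factorial n))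
      Filter.atTop (nhds (p * Real.exp (a * (-t)))) := by
    have h2 := FloorSemiring.tendsto_pow_div_factorial_atTop (a * (-t))
    have := (tendsto_const_nhds (x := p * Real.exp (a * (-t)))).add h2
    simpa using this
  apply ge_of_tendsto hlim
  filter_upwards with n
  calc G t ≤ p * (∑ k ∈ Finset.range n, (a * (-t))^k / (Nat.factorial k)) +
      (a * (-t))^n / (Nat.factorial n) := claim n t ht
  _ ≤ p * Real.exp (a * (-t)) + (a * (-t))^n / (Nat.factorial n) := by
      gcongr
      exact Real.sum_le_exp_of_nonneg hx n

lemma sideA (f : ℝ → ℝ) (hf_nonneg : ∀ x, 0 ≤ f x) (hf_int : Integrable f)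
    (hmean_int : Integrable (fun x => x * f x))
    (four_point : ∀ {a b c d : ℝ}, a ≤ c → c ≤ d → d ≤ b → a + b = c + d →
      f a * f b ≤ f c * f d) :
    f 0 * (∫ x in Ioi (0:ℝ), x * f x) ≤ (∫ x in Ici (0:ℝ), f x) ^ 2 := by
  set q : ℝ := f 0 with hq_def
  set p : ℝ := ∫ x in Ici (0:ℝ), f x with hp_def
  have hq_nonneg : 0 ≤ q := hf_nonneg 0
  have hp_nonneg : 0 ≤ p := setIntegral_nonneg measurableSet_Ici (fun x _ => hf_nonneg x)
  -- measurable nonneg representative g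
  obtain ⟨g0, hg0_meas, hfg0⟩ := hf_int.aemeasurable
  set g : ℝ → ℝ := fun x => max (g0 x) 0 with hg_def
  have hg_meas : Measurable g := hg0_meas.max measurable_const
  have hfg : f =ᵐ[volume] g := by
    filter_upwards [hfg0] with x hx
    rw [hg_def]; simp only [← hx]
    exact (max_eq_left (hf_nonneg x)).symm
  have hg_nonneg : ∀ x, 0 ≤ g x := fun x => le_max_right _ _
  -- the pair bound
  have pair : ∀ x t : ℝ, 0 < t → t < x → q * f x ≤ f t * f (x - t) := by
    intro x t ht htx
    rcases le_or_gt t (x - t) with h | h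
    · exact four_point ht.le h (by linarith) (by ring)
    · have := four_point (show (0:ℝ) ≤ x - t by linarith) h.le (by linarith : t ≤ x) (by ring)
      linarith [this]
  -- the double integral kernel
  set u : ℝ × ℝ → ENNReal := fun z =>
    if 0 < z.2 ∧ z.2 < z.1 then ENNReal.ofReal (g z.2 * g (z.1 - z.2)) else 0 with hu_def
  have hu_meas : Measurable u := by
    apply Measurable.ite
    · exact (measurableSet_lt measurable_const measurable_snd).inter
        (measurableSet_lt measurable_snd measurable_fst)
    · exact ((hg_meas.comp measurable_snd).mul
        (hg_meas.comp (measurable_fst.sub measurable_snd))).ennreal_ofReal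
    · exact measurable_const
  -- Step A: lower bound per x
  have stepA : ∀ x : ℝ, ENNReal.ofReal (q * (x * f x)) ≤ ∫⁻ t, u (x, t) := by
    intro x
    rcases le_or_gt x 0 with hx | hx
    · have hxf : x * f x ≤ 0 := mul_nonpos_of_nonpos_of_nonneg hx (hf_nonneg x)
      have : q * (x * f x) ≤ 0 := mul_nonpos_iff.mpr (Or.inl ⟨hq_nonneg, hxf⟩)
      simp [ENNReal.ofReal_eq_zero.mpr this]
    · -- x > 0
      have h1 : ∫⁻ t, u (x, t) = ∫⁻ t in Ioo 0 x, ENNReal.ofReal (g t * g (x - t)) := by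
        rw [← lintegral_indicator measurableSet_Ioo]
        congr 1
        funext t
        rw [indicator_apply]
        simp only [hu_def, mem_Ioo]
      have h2 : ∫⁻ t in Ioo 0 x, ENNReal.ofReal (g t * g (x - t))
          = ∫⁻ t in Ioo 0 x, ENNReal.ofReal (f t * f (x - t)) := by
        apply lintegral_congr_ae
        have e1 : (fun t => f t) =ᵐ[volume.restrict (Ioo 0 x)] g := ae_restrict_of_ae hfg
        have e2 : (fun t => f (x - t)) =ᵐ[volume.restrict (Ioo 0 x)] (fun t => g (x - t)) := by
          apply ae_restrict_of_ae
          exact (Measure.measurePreserving_sub_left volume x).quasiMeasurePreserving.ae_eq hfg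
        filter_upwards [e1, e2] with t h1 h2
        rw [h1, h2]
      have h3 : ∫⁻ t in Ioo 0 x, ENNReal.ofReal (q * f x)
          ≤ ∫⁻ t in Ioo 0 x, ENNReal.ofReal (f t * f (x - t)) := by
        apply lintegral_mono_ae
        rw [ae_restrict_iff' measurableSet_Ioo]
        filter_upwards with t ht
        exact ENNReal.ofReal_le_ofReal (pair x t ht.1 ht.2)
      have h4 : ∫⁻ t in Ioo 0 x, (ENNReal.ofReal (q * f x) : ENNReal)
          = ENNReal.ofReal (q * (x * f x)) := by
        rw [setLIntegral_const, Real.volume_Ioo, sub_zero,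
          ← ENNReal.ofReal_mul (mul_nonneg hq_nonneg (hf_nonneg x))]
        congr 1
        ring
      rw [h1, h2, ← h4]
      exact h3
  -- Step B: compute the swapped integral
  have hC : ∫⁻ y in Ioi (0:ℝ), ENNReal.ofReal (g y) = ENNReal.ofReal p := by
    have e1 : ∫⁻ y in Ioi (0:ℝ), ENNReal.ofReal (g y)
        = ∫⁻ y in Ioi (0:ℝ), ENNReal.ofReal (f y) := by
      apply lintegral_congr_ae
      filter_upwards [ae_restrict_of_ae hfg] with y hy
      rw [hy]
    rw [e1, ← ofReal_integral_eq_lintegral_ofReal hf_int.integrableOn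
      (ae_restrict_of_ae (Filter.Eventually.of_forall hf_nonneg))]
    rw [hp_def, integral_Ici_eq_integral_Ioi]
  have stepB : ∀ t : ℝ, ∫⁻ x, u (x, t) ≤ (Ioi (0:ℝ)).indicator
      (fun t => ENNReal.ofReal (g t) * ENNReal.ofReal p) t := by
    intro t
    rcases le_or_gt t 0 with ht | ht
    · have : ∀ x, u (x, t) = 0 := by
        intro x
        rw [hu_def]
        simp only
        rw [if_neg]
        rintro ⟨h1, -⟩
        exact absurd ht (not_le.mpr h1)
      simp [this, indicator_apply]
    · have h1 : ∫⁻ x, u (x, t) = ∫⁻ x in Ioi t, ENNReal.ofReal (g t) * ENNReal.ofReal (g (x - t)) := by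
        rw [← lintegral_indicator measurableSet_Ioi]
        congr 1
        funext x
        rw [indicator_apply]
        simp only [hu_def, mem_Ioi]
        by_cases hc : t < x
        · rw [if_pos ⟨ht, hc⟩, if_pos hc,
            ENNReal.ofReal_mul (hg_nonneg t)]
        · rw [if_neg (fun hh => hc hh.2), if_neg hc]
      have h2 : ∫⁻ x in Ioi t, ENNReal.ofReal (g (x - t)) = ENNReal.ofReal p := by
        have h1m : MeasurePreserving (fun u : ℝ => u + t) volume volume :=
          measurePreserving_add_right volume t
        have h2m : MeasurableEmbedding (fun u : ℝ => u + t) :=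
          (Homeomorph.addRight t).measurableEmbedding
        have heq := h1m.setLIntegral_comp_preimage_emb h2m
          (fun x => ENNReal.ofReal (g (x - t))) (Ioi t)
        have hpre : (fun u : ℝ => u + t) ⁻¹' (Ioi t) = Ioi 0 := by
          ext u; simp [lt_sub_iff_add_lt]
        rw [← heq, hpre]
        simp only [add_sub_cancel_right]
        exact hC
      rw [h1, lintegral_const_mul' _ _ ENNReal.ofReal_ne_top, h2,
        indicator_of_mem (mem_Ioi.mpr ht)]
  -- assemble
  have hswap : ∫⁻ x, ∫⁻ t, u (x, t) = ∫⁻ t, ∫⁻ x, u (x, t) :=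
    lintegral_lintegral_swap hu_meas.aemeasurable
  have hrhs : ∫⁻ t, (Ioi (0:ℝ)).indicator
      (fun t => ENNReal.ofReal (g t) * ENNReal.ofReal p) t
      = ENNReal.ofReal p * ENNReal.ofReal p := by
    rw [lintegral_indicator measurableSet_Ioi,
      lintegral_mul_const' _ _ ENNReal.ofReal_ne_top, hC]
  have hlhs : ∫⁻ x in Ioi (0:ℝ), ENNReal.ofReal (q * (x * f x))
      = ENNReal.ofReal q * ENNReal.ofReal (∫ x in Ioi (0:ℝ), x * f x) := by
    have e1 : ∫⁻ x in Ioi (0:ℝ), ENNReal.ofReal (q * (x * f x))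
        = ∫⁻ x in Ioi (0:ℝ), ENNReal.ofReal q * ENNReal.ofReal (x * f x) := by
      apply lintegral_congr_ae
      filter_upwards with x
      rw [ENNReal.ofReal_mul hq_nonneg]
    rw [e1, lintegral_const_mul' _ _ ENNReal.ofReal_ne_top]
    congr 1
    have hnn : 0 ≤ᵐ[volume.restrict (Ioi (0:ℝ))] fun x => x * f x :=
      (ae_restrict_iff' measurableSet_Ioi).mpr (Filter.Eventually.of_forall
        (fun x hx => mul_nonneg (le_of_lt hx) (hf_nonneg x)))
    rw [← ofReal_integral_eq_lintegral_ofReal hmean_int.integrableOn hnn]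
  have main : ENNReal.ofReal q * ENNReal.ofReal (∫ x in Ioi (0:ℝ), x * f x)
      ≤ ENNReal.ofReal p * ENNReal.ofReal p := by
    rw [← hlhs, ← hrhs]
    calc ∫⁻ x in Ioi (0:ℝ), ENNReal.ofReal (q * (x * f x))
        ≤ ∫⁻ x in Ioi (0:ℝ), ∫⁻ t, u (x, t) := lintegral_mono (fun x => stepA x)
    _ ≤ ∫⁻ x, ∫⁻ t, u (x, t) := setLIntegral_le_lintegral _ _
    _ = ∫⁻ t, ∫⁻ x, u (x, t) := hswap
    _ ≤ _ := lintegral_mono (fun t => stepB t)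
  have hA'_nonneg : 0 ≤ ∫ x in Ioi (0:ℝ), x * f x :=
    setIntegral_nonneg measurableSet_Ioi (fun x hx => mul_nonneg (le_of_lt hx) (hf_nonneg x))
  rw [← ENNReal.ofReal_mul hq_nonneg, ← ENNReal.ofReal_mul hp_nonneg] at main
  have := (ENNReal.ofReal_le_ofReal_iff (mul_nonneg hp_nonneg hp_nonneg)).mp main
  calc q * (∫ x in Ioi (0:ℝ), x * f x) ≤ p * p := this
  _ = p ^ 2 := (sq p).symm

lemma sideB (f : ℝ → ℝ) (hf_nonneg : ∀ x, 0 ≤ f x) (hf_int : Integrable f)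
    (hmean_int : Integrable (fun x => x * f x))
    (G : ℝ → ℝ) (hG_def : G = fun t => ∫ x in Ici t, f x)
    (hG_meas : Measurable G)
    (hG_nonneg : ∀ t, 0 ≤ G t) (hG_le_one : ∀ t, G t ≤ 1)
    (p q : ℝ) (hp_def : p = G 0) (hq_def : q = f 0)
    (hp_pos : 0 < p) (hq_pos : 0 < q) (hp_le_one : p ≤ 1)
    (a : ℝ) (ha_def : a = q / p) (ha_pos : 0 < a)
    (hsplit : ∀ t : ℝ, (∫ x in Iio t, f x) + G t = 1)
    (hGexp : ∀ t ≤ (0:ℝ), G t ≤ p * Real.exp (a * (-t))) :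
    p * (-Real.log p - (1 - p)) / q ≤ ∫ x in Iio (0:ℝ), (-x) * f x := by
  set F : ℝ → ℝ := fun t => ∫ x in Iio t, f x with hF_def
  have hF_eq : ∀ t, F t = 1 - G t := fun t => by linarith [hsplit t]
  have hF_nonneg : ∀ t, 0 ≤ F t := fun t =>
    setIntegral_nonneg measurableSet_Iio (fun x _ => hf_nonneg x)
  have hF_meas : Measurable F := by
    have : F = fun t => 1 - G t := funext hF_eq
    rw [this]
    exact measurable_const.sub hG_meas
  set t₀ : ℝ := Real.log p / a with ht₀_def
  have hlogp : Real.log p ≤ 0 := Real.log_nonpos hp_pos.le hp_le_one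
  have ht₀ : t₀ ≤ 0 := div_nonpos_of_nonpos_of_nonneg hlogp ha_pos.le
  have hexp_t₀ : Real.exp (a * (-t₀)) = 1/p := by
    rw [ht₀_def]
    rw [show a * (-(Real.log p / a)) = -Real.log p by field_simp]
    rw [Real.exp_neg, Real.exp_log hp_pos]
    exact (one_div p).symm
  have hIlb : ∀ t ∈ Icc t₀ (0:ℝ), 0 ≤ 1 - p * Real.exp (a * (-t)) := by
    intro t ht
    have h1 : a * (-t) ≤ a * (-t₀) := by
      apply mul_le_mul_of_nonneg_left _ ha_pos.le
      linarith [ht.1]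
    have := Real.exp_le_exp.mpr h1
    rw [hexp_t₀] at this
    have h2 : p * Real.exp (a * (-t)) ≤ p * (1/p) := mul_le_mul_of_nonneg_left this hp_pos.le
    rw [mul_one_div_cancel hp_pos.ne'] at h2
    linarith
  have hFlb : ∀ t ∈ Icc t₀ (0:ℝ), 1 - p * Real.exp (a * (-t)) ≤ F t := by
    intro t ht
    rw [hF_eq t]
    linarith [hGexp t ht.2]
  -- value of the explicit integral
  have hval : ∫ t in t₀..(0:ℝ), (1 - p * Real.exp (a * (-t))) = -t₀ - (1 - p)/a := by
    have hderiv : ∀ t : ℝ, HasDerivAt (fun t => t + (p/a) * Real.exp (a * (-t)))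
        (1 - p * Real.exp (a * (-t))) t := by
      intro t
      have h1 : HasDerivAt (fun t : ℝ => a * (-t)) (-a) t := by
        have := ((hasDerivAt_id t).neg).const_mul a
        simpa using this
      have h2 : HasDerivAt (fun t : ℝ => Real.exp (a * (-t)))
          (Real.exp (a * (-t)) * (-a)) t := h1.exp
      have h3 := (hasDerivAt_id t).add (h2.const_mul (p/a))
      refine h3.congr_deriv ?_
      have hpa : p / a * (-a) = -p := by rw [mul_neg, div_mul_cancel₀ _ ha_pos.ne']
      linear_combination (Real.exp (a * -t)) * hpa
    have hcont : Continuous (fun t : ℝ => 1 - p * Real.exp (a * (-t))) :=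
      continuous_const.sub (continuous_const.mul (Real.continuous_exp.comp
        (continuous_const.mul (continuous_neg : Continuous fun t : ℝ => -t))))
    rw [intervalIntegral.integral_eq_sub_of_hasDerivAt (fun t _ => hderiv t)
      (hcont.intervalIntegrable t₀ 0)]
    simp only [neg_zero, mul_zero, Real.exp_zero, mul_one]
    rw [hexp_t₀]
    field_simp
    ring
  -- monotone comparison on Ioo t₀ 0
  have hF_intOn : IntegrableOn F (Ioo t₀ 0) := by
    apply Measure.integrableOn_of_bounded (M := 1) (by simp) hF_meas.aestronglyMeasurable
    filter_upwards with t
    rw [Real.norm_eq_abs, abs_le]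
    refine ⟨by linarith [hF_nonneg t], ?_⟩
    rw [hF_eq t]; linarith [hG_nonneg t]
  have hcont2 : Continuous (fun t : ℝ => 1 - p * Real.exp (a * (-t))) :=
      continuous_const.sub (continuous_const.mul (Real.continuous_exp.comp
        (continuous_const.mul (continuous_neg : Continuous fun t : ℝ => -t))))
  have hmono : ∫ t in Ioo t₀ (0:ℝ), (1 - p * Real.exp (a * (-t))) ≤ ∫ t in Ioo t₀ (0:ℝ), F t :=
    setIntegral_mono_on ((hcont2.integrableOn_Icc (a := t₀) (b := 0)).mono_set Ioo_subset_Icc_self)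
      hF_intOn measurableSet_Ioo (fun t ht => hFlb t ⟨ht.1.le, ht.2.le⟩)
  -- lintegral swap: ∫_{Ioo t₀ 0} F ≤ ∫_{Iio 0} (-x) f x
  obtain ⟨g0, hg0_meas, hfg0⟩ := hf_int.aemeasurable
  set g : ℝ → ℝ := fun x => max (g0 x) 0 with hg_def2
  have hg_meas : Measurable g := hg0_meas.max measurable_const
  have hfg : f =ᵐ[volume] g := by
    filter_upwards [hfg0] with x hx
    rw [hg_def2]; simp only [← hx]
    exact (max_eq_left (hf_nonneg x)).symm
  have hg_nonneg : ∀ x, 0 ≤ g x := fun x => le_max_right _ _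
  set v : ℝ × ℝ → ENNReal := fun z =>
    if t₀ < z.1 ∧ z.1 < 0 ∧ z.2 < z.1 then ENNReal.ofReal (g z.2) else 0 with hv_def
  have hv_meas : Measurable v := by
    apply Measurable.ite
    · exact ((measurableSet_lt measurable_const measurable_fst).inter
        ((measurableSet_lt measurable_fst measurable_const).inter
          (measurableSet_lt measurable_snd measurable_fst)))
    · exact (hg_meas.comp measurable_snd).ennreal_ofReal
    · exact measurable_const
  -- inner representation for t in Ioo t₀ 0
  have hinner : ∀ t ∈ Ioo t₀ (0:ℝ), ∫⁻ x, v (t, x) = ENNReal.ofReal (F t) := by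
    intro t ht
    have h1 : ∫⁻ x, v (t, x) = ∫⁻ x in Iio t, ENNReal.ofReal (g x) := by
      rw [← lintegral_indicator measurableSet_Iio]
      congr 1
      funext x
      rw [indicator_apply]
      simp only [hv_def, mem_Iio]
      by_cases hc : x < t
      · rw [if_pos ⟨ht.1, ht.2, hc⟩, if_pos hc]
      · rw [if_neg (fun hh => hc hh.2.2), if_neg hc]
    have h2 : ∫⁻ x in Iio t, ENNReal.ofReal (g x) = ∫⁻ x in Iio t, ENNReal.ofReal (f x) := by
      apply lintegral_congr_ae
      filter_upwards [ae_restrict_of_ae hfg] with x hx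
      rw [hx]
    rw [h1, h2, ← ofReal_integral_eq_lintegral_ofReal hf_int.integrableOn
      (ae_restrict_of_ae (Filter.Eventually.of_forall hf_nonneg))]
  -- outer bound for every x
  have houter : ∀ x : ℝ, (∫⁻ t, v (t, x)) ≤ (Iio (0:ℝ)).indicator
      (fun x => ENNReal.ofReal (g x) * ENNReal.ofReal (-x)) x := by
    intro x
    have hset : {t : ℝ | t₀ < t ∧ t < 0 ∧ x < t} = Ioo (max t₀ x) 0 := by
      ext t
      simp only [mem_setOf_eq, mem_Ioo, max_lt_iff]
      tauto
    have h1 : ∫⁻ t, v (t, x) = ENNReal.ofReal (g x) * volume (Ioo (max t₀ x) 0) := by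
      have : (fun t => v (t, x)) = (Ioo (max t₀ x) 0).indicator
          (fun _ => ENNReal.ofReal (g x)) := by
        funext t
        rw [indicator_apply]
        simp only [hv_def]
        by_cases hc : t₀ < t ∧ t < 0 ∧ x < t
        · rw [if_pos hc, if_pos (show t ∈ Ioo (max t₀ x) 0 from hset ▸ hc)]
        · rw [if_neg hc, if_neg (show t ∉ Ioo (max t₀ x) 0 from fun hmem => hc (by rw [← hset] at hmem; exact hmem))]
      rw [this, lintegral_indicator measurableSet_Ioo, setLIntegral_const]
    rcases lt_or_ge x 0 with hx | hx
    · rw [h1, indicator_of_mem (mem_Iio.mpr hx), Real.volume_Ioo]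
      exact mul_le_mul_right (ENNReal.ofReal_le_ofReal
        (by have := le_max_right t₀ x; linarith)) _
    · rw [h1]
      have : Ioo (max t₀ x) 0 = ∅ := Ioo_eq_empty (not_lt.mpr (le_max_of_le_right hx))
      rw [this]
      simp
  have hB'_int : IntegrableOn (fun x => (-x) * f x) (Iio (0:ℝ)) := by
    have : (fun x : ℝ => (-x) * f x) = fun x => -(x * f x) := funext (fun x => by ring)
    rw [this]
    exact hmean_int.neg.integrableOn
  have hB'_nonneg : 0 ≤ ∫ x in Iio (0:ℝ), (-x) * f x :=
    setIntegral_nonneg measurableSet_Iio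
      (fun x hx => mul_nonneg (by simp at hx; linarith) (hf_nonneg x))
  have hswapB : ENNReal.ofReal (∫ t in Ioo t₀ (0:ℝ), F t)
      ≤ ENNReal.ofReal (∫ x in Iio (0:ℝ), (-x) * f x) := by
    have e1 : ENNReal.ofReal (∫ t in Ioo t₀ (0:ℝ), F t)
        = ∫⁻ t in Ioo t₀ (0:ℝ), ENNReal.ofReal (F t) :=
      ofReal_integral_eq_lintegral_ofReal hF_intOn
        (ae_restrict_of_ae (Filter.Eventually.of_forall hF_nonneg))
    have e2 : ∫⁻ t in Ioo t₀ (0:ℝ), ENNReal.ofReal (F t)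
        = ∫⁻ t in Ioo t₀ (0:ℝ), ∫⁻ x, v (t, x) := by
      apply setLIntegral_congr_fun measurableSet_Ioo
      intro t ht
      exact (hinner t ht).symm
    have e3 : ∫⁻ t in Ioo t₀ (0:ℝ), ∫⁻ x, v (t, x) = ∫⁻ t, ∫⁻ x, v (t, x) := by
      rw [← lintegral_indicator measurableSet_Ioo]
      apply lintegral_congr
      intro t
      rw [indicator_apply]
      by_cases hc : t ∈ Ioo t₀ (0:ℝ)
      · rw [if_pos hc]
      · rw [if_neg hc]
        have : ∀ x : ℝ, v (t, x) = 0 := by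
          intro x
          simp only [hv_def]
          rw [if_neg]
          rintro ⟨h1, h2, -⟩
          exact hc ⟨h1, h2⟩
        simp [this]
    have e4 : ∫⁻ t, ∫⁻ x, v (t, x) = ∫⁻ x, ∫⁻ t, v (t, x) :=
      lintegral_lintegral_swap hv_meas.aemeasurable
    have e5 : ∫⁻ x, ((Iio (0:ℝ)).indicator
        (fun x => ENNReal.ofReal (g x) * ENNReal.ofReal (-x))) x
        = ENNReal.ofReal (∫ x in Iio (0:ℝ), (-x) * f x) := by
      rw [lintegral_indicator measurableSet_Iio]
      have e6 : ∫⁻ x in Iio (0:ℝ), ENNReal.ofReal (g x) * ENNReal.ofReal (-x)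
          = ∫⁻ x in Iio (0:ℝ), ENNReal.ofReal ((-x) * f x) := by
        apply lintegral_congr_ae
        filter_upwards [ae_restrict_of_ae hfg] with x hx
        rw [← ENNReal.ofReal_mul (hg_nonneg x), ← hx, mul_comm]
      rw [e6, ← ofReal_integral_eq_lintegral_ofReal hB'_int]
      exact (ae_restrict_iff' measurableSet_Iio).mpr (Filter.Eventually.of_forall
        (fun x hx => mul_nonneg (by simp at hx; linarith) (hf_nonneg x)))
    calc ENNReal.ofReal (∫ t in Ioo t₀ (0:ℝ), F t)
        = ∫⁻ x, ∫⁻ t, v (t, x) := by rw [e1, e2, e3, e4]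
    _ ≤ ∫⁻ x, ((Iio (0:ℝ)).indicator
        (fun x => ENNReal.ofReal (g x) * ENNReal.ofReal (-x))) x := lintegral_mono houter
    _ = ENNReal.ofReal (∫ x in Iio (0:ℝ), (-x) * f x) := e5
  have hup : ∫ t in Ioo t₀ (0:ℝ), F t ≤ ∫ x in Iio (0:ℝ), (-x) * f x :=
    (ENNReal.ofReal_le_ofReal_iff hB'_nonneg).mp hswapB
  have hIoo_val : ∫ t in Ioo t₀ (0:ℝ), (1 - p * Real.exp (a * (-t))) = -t₀ - (1 - p)/a := by
    rw [setIntegral_congr_set Ioo_ae_eq_Ioc, ← intervalIntegral.integral_of_le ht₀]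
    exact hval
  have hchain : -t₀ - (1 - p)/a ≤ ∫ x in Iio (0:ℝ), (-x) * f x := by
    rw [← hIoo_val]
    exact hmono.trans hup
  have heq : p * (-Real.log p - (1 - p)) / q = -t₀ - (1 - p)/a := by
    rw [ht₀_def, ha_def]
    field_simp
  rw [heq]
  exact hchain

theorem key (f : ℝ → ℝ)
    (hf_nonneg : ∀ x, 0 ≤ f x)
    (hf_density : ∫ x, f x = 1)
    (hf_int : Integrable f)
    (hf_logconcave : ∀ x y l : ℝ, 0 ≤ l → l ≤ 1 →
      f x ^ l * f y ^ (1 - l) ≤ f (l * x + (1 - l) * y))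
    (hmean_int : Integrable (fun x => x * f x))
    (hmean_zero : ∫ x, x * f x = 0) :
    1 / Real.exp 1 ≤ ∫ x in Ici (0:ℝ), f x := by
  have four_point : ∀ {a b c d : ℝ}, a ≤ c → c ≤ d → d ≤ b → a + b = c + d →
      f a * f b ≤ f c * f d :=
    fun hac hcd hdb hsum => four_point_lemma f hf_nonneg hf_logconcave hac hcd hdb hsum
  set G : ℝ → ℝ := fun t => ∫ x in Ici t, f x with hG
  set p : ℝ := G 0 with hp_def
  set q : ℝ := f 0 with hq_def
  have hp_eq : p = ∫ x in Ici (0:ℝ), f x := rfl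
  have hG_anti : Antitone G := by
    intro s t hst
    apply setIntegral_mono_set hf_int.integrableOn
      (Filter.Eventually.of_forall (fun x => hf_nonneg x))
    exact (Ici_subset_Ici.mpr hst).eventuallyLE
  have hG_nonneg : ∀ t, 0 ≤ G t := fun t =>
    setIntegral_nonneg measurableSet_Ici (fun x _ => hf_nonneg x)
  have hG_le_one : ∀ t, G t ≤ 1 := by
    intro t
    rw [← hf_density]
    exact setIntegral_le_integral hf_int (Filter.Eventually.of_forall hf_nonneg)
  have hG_meas : Measurable G := hG_anti.measurable
  -- a.e. x ≠ 0
  have ae_ne : ∀ᵐ x : ℝ, x ≠ 0 := by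
    rw [MeasureTheory.ae_iff]
    have : {x : ℝ | ¬ x ≠ 0} = {0} := by ext x; simp
    rw [this]
    exact Real.volume_singleton
  -- existence of positive density points on both sides
  have exists_pos : ∃ x2 : ℝ, 0 < x2 ∧ 0 < f x2 := by
    by_contra h
    push_neg at h
    have hfz : ∀ x : ℝ, 0 < x → f x = 0 := fun x hx => le_antisymm (h x hx) (hf_nonneg x)
    have hnonpos : ∀ x : ℝ, x * f x ≤ 0 := by
      intro x
      rcases le_or_gt x 0 with hx | hx
      · exact mul_nonpos_of_nonpos_of_nonneg hx (hf_nonneg x)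
      · rw [hfz x hx]; ring_nf; rfl
    have hzero : (fun x => -(x * f x)) =ᵐ[volume] 0 := by
      have hz : ∫ x : ℝ, -(x * f x) = 0 := by rw [integral_neg, hmean_zero, neg_zero]
      exact (MeasureTheory.integral_eq_zero_iff_of_nonneg_ae
        (Filter.Eventually.of_forall (fun x => by simpa using hnonpos x))
        hmean_int.neg).mp hz
    have hfae : f =ᵐ[volume] 0 := by
      filter_upwards [hzero, ae_ne] with x hx hx0
      have : x * f x = 0 := by simpa using hx
      rcases mul_eq_zero.mp this with h1 | h2
      · exact absurd h1 hx0
      · exact h2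
    rw [integral_congr_ae hfae] at hf_density
    simp at hf_density
  have exists_neg : ∃ x1 : ℝ, x1 < 0 ∧ 0 < f x1 := by
    by_contra h
    push_neg at h
    have hfz : ∀ x : ℝ, x < 0 → f x = 0 := fun x hx => le_antisymm (h x hx) (hf_nonneg x)
    have hnn : ∀ x : ℝ, 0 ≤ x * f x := by
      intro x
      rcases lt_or_ge x 0 with hx | hx
      · rw [hfz x hx]; ring_nf; rfl
      · exact mul_nonneg hx (hf_nonneg x)
    have hzero : (fun x => x * f x) =ᵐ[volume] 0 :=
      (MeasureTheory.integral_eq_zero_iff_of_nonneg_ae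
        (Filter.Eventually.of_forall hnn) hmean_int).mp hmean_zero
    have hfae : f =ᵐ[volume] 0 := by
      filter_upwards [hzero, ae_ne] with x hx hx0
      have : x * f x = 0 := by simpa using hx
      rcases mul_eq_zero.mp this with h1 | h2
      · exact absurd h1 hx0
      · exact h2
    rw [integral_congr_ae hfae] at hf_density
    simp at hf_density
  obtain ⟨x2, hx2_pos, hfx2⟩ := exists_pos
  obtain ⟨x1, hx1_neg, hfx1⟩ := exists_neg
  -- positivity between positive points
  have hbetween : ∀ {y1 y2 t : ℝ}, 0 < f y1 → 0 < f y2 → y1 ≤ t → t ≤ y2 → 0 < f t := by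
    intro y1 y2 t h1 h2 hy1 hy2
    rcases eq_or_lt_of_le (hy1.trans hy2) with he | hlt
    · have : y1 = t := le_antisymm hy1 (by linarith)
      rwa [← this]
    set l : ℝ := (y2 - t) / (y2 - y1) with hl
    have hd : (0:ℝ) < y2 - y1 := by linarith
    have hl0 : 0 ≤ l := div_nonneg (by linarith) hd.le
    have hl1 : l ≤ 1 := by rw [div_le_one hd]; linarith
    have he : l * y1 + (1 - l) * y2 = t := by
      have h' : l * (y2 - y1) = y2 - t := by rw [hl]; exact div_mul_cancel₀ _ hd.ne'
      linarith
    have := hf_logconcave y1 y2 l hl0 hl1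
    rw [he] at this
    exact lt_of_lt_of_le (mul_pos (Real.rpow_pos_of_pos h1 l)
      (Real.rpow_pos_of_pos h2 (1 - l))) this
  have hq_pos : 0 < q := hbetween hfx1 hfx2 hx1_neg.le hx2_pos.le
  have hp_pos : 0 < p := by
    rw [hp_eq, setIntegral_pos_iff_support_of_nonneg_ae
      (Filter.Eventually.of_forall hf_nonneg) hf_int.integrableOn]
    have hsub : Icc (0:ℝ) x2 ⊆ (Function.support f) ∩ Ici 0 := by
      intro t ht
      exact ⟨ne_of_gt (hbetween hq_pos hfx2 ht.1 ht.2), ht.1⟩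
    calc (0:ENNReal) < ENNReal.ofReal x2 := by simp [hx2_pos]
    _ = volume (Icc (0:ℝ) x2) := by rw [Real.volume_Icc]; norm_num
    _ ≤ volume (Function.support f ∩ Ici 0) := measure_mono hsub
  have hp_le_one : p ≤ 1 := hG_le_one 0
  have hsplit : ∀ t : ℝ, (∫ x in Iio t, f x) + G t = 1 := by
    intro t
    rw [← hf_density]
    have := MeasureTheory.integral_add_compl (measurableSet_Iio (a := t)) hf_int
    rwa [compl_Iio] at this
  -- hazard bound
  have hazard : ∀ s ≤ (0:ℝ), f s * p ≤ q * G s := by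
    intro s hs
    have htrans : ∫ u in Ici (0:ℝ), f (u + s) = ∫ x in Ici s, f x := by
      have h1 : MeasurePreserving (fun u : ℝ => u + s) volume volume :=
        measurePreserving_add_right volume s
      have h2 : MeasurableEmbedding (fun u : ℝ => u + s) :=
        (Homeomorph.addRight s).measurableEmbedding
      rw [← h1.setIntegral_preimage_emb h2 f (Ici s)]
      congr 1
      ext u
      simp [le_sub_iff_add_le]
    have hGs : G s = ∫ x in Ici s, f x := rfl
    rw [hp_eq, hGs, hq_def, ← htrans, ← MeasureTheory.integral_const_mul,
      ← MeasureTheory.integral_const_mul]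
    apply setIntegral_mono_on
    · exact (hf_int.const_mul (f s)).integrableOn
    · exact ((hf_int.comp_add_right s).const_mul (f 0)).integrableOn
    · exact measurableSet_Ici
    · intro u hu
      simp only [mem_Ici] at hu
      rcases le_or_gt 0 (u + s) with h | h
      · exact four_point hs h (by linarith) (by ring)
      · have := four_point (show s ≤ u + s by linarith) h.le hu (by ring)
        calc f s * f u ≤ f (u + s) * f 0 := this
        _ = f 0 * f (u + s) := mul_comm _ _
  have hGint : ∀ t ≤ (0:ℝ), G t = p + ∫ s in t..(0:ℝ), f s := by
    intro t ht
    have hGt : G t = ∫ x in Ici t, f x := rfl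
    rw [hGt, hp_eq, intervalIntegral.integral_of_le ht]
    have h1 : Ici t = Ico t 0 ∪ Ici (0:ℝ) := (Ico_union_Ici_eq_Ici ht).symm
    rw [h1, setIntegral_union ((Iio_disjoint_Ici le_rfl).mono_left Ico_subset_Iio_self)
      measurableSet_Ici hf_int.integrableOn hf_int.integrableOn]
    rw [setIntegral_congr_set Ico_ae_eq_Ioc]
    ring
  set a : ℝ := q / p with ha_def
  have ha_pos : 0 < a := div_pos hq_pos hp_pos
  have hfG : ∀ s ≤ (0:ℝ), f s ≤ a * G s := by
    intro s hs
    have := hazard s hs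
    rw [ha_def]
    rw [div_mul_eq_mul_div, le_div_iff₀ hp_pos]
    linarith [this]
  have hGexp : ∀ t ≤ (0:ℝ), G t ≤ p * Real.exp (a * (-t)) :=
    tailBound f G hf_int hG_meas hG_nonneg hG_le_one p a hp_pos ha_pos hGint hfG hf_nonneg
  have hA0 := sideA f hf_nonneg hf_int hmean_int four_point
  have hA : q * (∫ x in Ioi (0:ℝ), x * f x) ≤ p ^ 2 := by
    rw [hq_def, hp_eq]
    exact hA0
  have hB : p * (-Real.log p - (1 - p)) / q ≤ ∫ x in Iio (0:ℝ), (-x) * f x :=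
    sideB f hf_nonneg hf_int hmean_int G hG hG_meas hG_nonneg hG_le_one p q hp_def hq_def
      hp_pos hq_pos hp_le_one a ha_def ha_pos hsplit hGexp
  have hAB : ∫ x in Ioi (0:ℝ), x * f x = ∫ x in Iio (0:ℝ), (-x) * f x := by
    have h1 := MeasureTheory.integral_add_compl (measurableSet_Iio (a := (0:ℝ))) hmean_int
    rw [compl_Iio, hmean_zero] at h1
    have h2 : ∫ x in Ici (0:ℝ), x * f x = ∫ x in Ioi (0:ℝ), x * f x :=
      integral_Ici_eq_integral_Ioi
    have h3 : ∫ x in Iio (0:ℝ), (-x) * f x = -∫ x in Iio (0:ℝ), x * f x := by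
      rw [← integral_neg]
      congr 1
      funext x
      ring
    rw [h2] at h1
    rw [h3]
    linarith
  have hfinal : p * (-Real.log p - (1 - p)) ≤ p ^ 2 := by
    have h1 : p * (-Real.log p - (1 - p)) ≤ q * (∫ x in Iio (0:ℝ), (-x) * f x) := by
      rw [div_le_iff₀ hq_pos] at hB
      calc p * (-Real.log p - (1 - p)) ≤ (∫ x in Iio (0:ℝ), (-x) * f x) * q := hB
      _ = q * (∫ x in Iio (0:ℝ), (-x) * f x) := mul_comm _ _
    calc p * (-Real.log p - (1 - p)) ≤ q * (∫ x in Iio (0:ℝ), (-x) * f x) := h1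
    _ = q * (∫ x in Ioi (0:ℝ), x * f x) := by rw [hAB]
    _ ≤ p ^ 2 := hA
  have hlog : -1 ≤ Real.log p := by
    have h4 : p * (-Real.log p - (1 - p)) ≤ p * p := by
      calc p * (-Real.log p - (1 - p)) ≤ p ^ 2 := hfinal
      _ = p * p := sq p
    have := (mul_le_mul_iff_right₀ hp_pos).mp h4
    linarith
  show 1 / Real.exp 1 ≤ p
  calc 1 / Real.exp 1 = Real.exp (-1) := by rw [Real.exp_neg]; ring
  _ ≤ Real.exp (Real.log p) := Real.exp_le_exp.mpr hlog
  _ = p := Real.exp_log hp_pos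

/-- if `X` has a logconcave density `f` on `ℝ` with finite mean `μ = E[X]`,
then `P(X ≥ E[X]) ≥ 1/e`. -/
theorem stmt2 (f : ℝ → ℝ)
    (hf_nonneg : ∀ x, 0 ≤ f x)
    (hf_density : ∫ x, f x = 1)
    (hf_int : Integrable f)
    (hf_logconcave : ∀ x y l : ℝ, 0 ≤ l → l ≤ 1 →
      f x ^ l * f y ^ (1 - l) ≤ f (l * x + (1 - l) * y))
    (hmean_int : Integrable (fun x => x * f x)) :
    1 / Real.exp 1 ≤ ∫ x in Ici (∫ x, x * f x), f x := by
  set μ := ∫ x, x * f x with hμ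
  set g : ℝ → ℝ := fun x => f (x + μ) with hg
  have hg_int : Integrable g := hf_int.comp_add_right μ
  have hgshift : Integrable (fun x => (x + μ) * f (x + μ)) :=
    hmean_int.comp_add_right μ
  have hg_mean_int : Integrable (fun x => x * g x) := by
    have : (fun x => x * g x) = fun x => ((x + μ) * f (x + μ)) - μ * f (x + μ) := by
      funext x; simp [hg]; ring
    rw [this]
    exact hgshift.sub (hg_int.const_mul μ)
  have hg_density : ∫ x, g x = 1 := by
    rw [hg]
    rw [integral_add_right_eq_self f μ]
    exact hf_density
  have hg_mean : ∫ x, x * g x = 0 := by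
    have h1 : (fun x => x * g x) = fun x => ((x + μ) * f (x + μ)) - μ * f (x + μ) := by
      funext x; simp [hg]; ring
    rw [h1, integral_sub hgshift (hg_int.const_mul μ)]
    rw [integral_add_right_eq_self (fun x => x * f x) μ]
    have : ∫ a : ℝ, μ * g a = μ := by
      rw [MeasureTheory.integral_const_mul, hg_density, mul_one]
    rw [this]
    simp [← hμ]
  have hg_lc : ∀ x y l : ℝ, 0 ≤ l → l ≤ 1 →
      g x ^ l * g y ^ (1 - l) ≤ g (l * x + (1 - l) * y) := by
    intro x y l hl0 hl1
    have := hf_logconcave (x + μ) (y + μ) l hl0 hl1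
    have e : l * x + (1 - l) * y + μ = l * (x + μ) + (1 - l) * (y + μ) := by ring
    simp only [hg]
    rw [e]
    exact this
  have := key g (fun x => hf_nonneg _) hg_density hg_int hg_lc hg_mean_int hg_mean
  rwa [show ∫ x in Ici (0:ℝ), g x = ∫ x in Ici μ, f x by
    have h1 : MeasurePreserving (fun u : ℝ => u + μ) volume volume :=
      measurePreserving_add_right volume μ
    have h2 : MeasurableEmbedding (fun u : ℝ => u + μ) :=
      (Homeomorph.addRight μ).measurableEmbedding
    have := h1.setIntegral_preimage_emb h2 f (Ici μ)
    rw [← this]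
    congr 1
    ext u
    simp [le_sub_iff_add_le]] at this
end

section
/- Let X be a random variable with logconcave density f : ℝ → ℝ≥0 and maximum value M_f. Then for every c > 0, P(f(X) ≤ c) ≤ c / M_f. -/
open MeasureTheory Set Filter Real Topology

lemma int_exp_Ioi (b' k C : ℝ) (hk : 0 < k) :
    ∫ t in Ioi b', C * Real.exp (-(k * (t - b'))) = C / k := by
  have hi : IntegrableOn (fun t => C * Real.exp (-(k * (t - b')))) (Ioi b') := by
    have : (fun t => C * Real.exp (-(k * (t - b')))) =
        fun t => (C * Real.exp (k * b')) * Real.exp (-k * t) := by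
      funext t; rw [mul_assoc, ← Real.exp_add]; ring_nf
    rw [this]
    exact (exp_neg_integrableOn_Ioi b' hk).const_mul _
  have hderiv : ∀ t ∈ Ici b', HasDerivAt (fun t => -(C / k) * Real.exp (-(k * (t - b'))))
      (C * Real.exp (-(k * (t - b')))) t := by
    intro t _
    have h1 : HasDerivAt (fun t : ℝ => -(k * (t - b'))) (-k) t := by
      simpa using (((hasDerivAt_id t).sub_const b').const_mul k).fun_neg
    have := (h1.exp).const_mul (-(C / k))
    refine this.congr_deriv ?_
    field_simp
  have htend : Tendsto (fun t => -(C / k) * Real.exp (-(k * (t - b')))) atTop (𝓝 0) := by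
    have h2 : Tendsto (fun t : ℝ => -(k * (t - b'))) atTop atBot := by
      apply tendsto_neg_atTop_atBot.comp
      exact (tendsto_atTop_add_const_right atTop (-b') tendsto_id).const_mul_atTop hk
    have := (Real.tendsto_exp_atBot.comp h2).const_mul (-(C / k))
    simpa using this
  have := integral_Ioi_of_hasDerivAt_of_tendsto' hderiv hi htend
  rw [this]; simp

lemma int_exp_Ioo (p q k C : ℝ) (hpq : p < q) (hk : 0 < k) :
    ∫ s in Ioo p q, C * Real.exp (k * (q - s)) = (C / k) * (Real.exp (k * (q - p)) - 1) := by
  have h1 : ∫ s in Ioo p q, C * Real.exp (k * (q - s)) =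
      ∫ s in p..q, C * Real.exp (k * (q - s)) := by
    rw [intervalIntegral.integral_of_le hpq.le, setIntegral_congr_set Ioo_ae_eq_Ioc]
  rw [h1]
  have hderiv : ∀ s ∈ uIcc p q, HasDerivAt (fun s => -(C / k) * Real.exp (k * (q - s)))
      (C * Real.exp (k * (q - s))) s := by
    intro s _
    have h2 : HasDerivAt (fun s : ℝ => k * (q - s)) (-k) s := by
      simpa using ((hasDerivAt_id s).const_sub q).const_mul k
    have := (h2.exp).const_mul (-(C / k))
    refine this.congr_deriv ?_
    field_simp
  have hint : IntervalIntegrable (fun s => C * Real.exp (k * (q - s))) volume p q :=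
    (Continuous.intervalIntegrable (by continuity) p q)
  rw [intervalIntegral.integral_eq_sub_of_hasDerivAt hderiv hint]
  simp
  ring

lemma ptwise_upper (f : ℝ → ℝ) (h0 : ∀ x, 0 ≤ f x)
    (hlc : ∀ x y l : ℝ, 0 ≤ l → l ≤ 1 →
      f x ^ l * f y ^ (1 - l) ≤ f (l * x + (1 - l) * y))
    (x₀ b' c M' : ℝ) (hxb : x₀ < b') (hc : 0 < c) (hcM : c < M')
    (hfx : M' ≤ f x₀) (hfb : f b' ≤ c) (t : ℝ) (ht : b' < t) :
    f t ≤ c * Real.exp (-(Real.log (M' / c) / (b' - x₀) * (t - b'))) := by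
  have hM : 0 < M' := hc.trans hcM
  have htx : 0 < t - x₀ := by linarith
  have hbx : 0 < b' - x₀ := by linarith
  have htb : 0 < t - b' := by linarith
  set l := (t - b') / (t - x₀) with hl
  have hl0 : 0 < l := div_pos htb htx
  have hl1 : l < 1 := (div_lt_one htx).2 (by linarith)
  have hcomb : l * x₀ + (1 - l) * t = b' := by rw [hl]; field_simp; ring
  have key := hlc x₀ t l hl0.le hl1.le
  rw [hcomb] at key
  have h2 : M' ^ l * f t ^ (1 - l) ≤ c := by
    calc M' ^ l * f t ^ (1 - l) ≤ f x₀ ^ l * f t ^ (1 - l) := by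
          apply mul_le_mul_of_nonneg_right _ (Real.rpow_nonneg (h0 t) _)
          exact Real.rpow_le_rpow hM.le hfx hl0.le
      _ ≤ f b' := key
      _ ≤ c := hfb
  rcases (h0 t).eq_or_lt with hft | hft
  · rw [← hft]; positivity
  · -- take logs
    have hlog : l * Real.log M' + (1 - l) * Real.log (f t) ≤ Real.log c := by
      have := Real.log_le_log (by positivity) h2
      rwa [Real.log_mul (by positivity) (by positivity), Real.log_rpow hM,
        Real.log_rpow hft] at this
    set A := Real.log M'
    set Cl := Real.log c
    set u := Real.log (f t)
    have lin1 : (t - b') * A + (b' - x₀) * u ≤ (t - x₀) * Cl := by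
      have h4 := mul_le_mul_of_nonneg_right hlog htx.le
      rw [hl] at h4
      field_simp at h4
      nlinarith [h4]
    have hLd : Real.log (M' / c) = A - Cl := Real.log_div (ne_of_gt hM) (ne_of_gt hc)
    rw [hLd, ← Real.exp_log hft, ← Real.exp_log hc, ← Real.exp_add]
    apply Real.exp_le_exp.2
    rw [div_mul_eq_mul_div, le_add_neg_iff_add_le, add_comm, ← le_sub_iff_add_le,
      div_le_iff₀ hbx]
    nlinarith [lin1]

lemma ptwise_lower (f : ℝ → ℝ) (h0 : ∀ x, 0 ≤ f x)
    (hlc : ∀ x y l : ℝ, 0 ≤ l → l ≤ 1 →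
      f x ^ l * f y ^ (1 - l) ≤ f (l * x + (1 - l) * y))
    (x₀ t' c M' : ℝ) (hxt : x₀ < t') (hc : 0 < c) (hcM : c < M')
    (hfx : M' ≤ f x₀) (hft : c ≤ f t') (s : ℝ) (hs : s ∈ Ioo x₀ t') :
    c * Real.exp (Real.log (M' / c) / (t' - x₀) * (t' - s)) ≤ f s := by
  have hM : 0 < M' := hc.trans hcM
  have htx : 0 < t' - x₀ := by linarith
  have hts : 0 < t' - s := by linarith [hs.2]
  have hsx : 0 < s - x₀ := by linarith [hs.1]
  set l := (t' - s) / (t' - x₀) with hl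
  have hl0 : 0 < l := div_pos hts htx
  have hl1 : l < 1 := (div_lt_one htx).2 (by linarith)
  have hcomb : l * x₀ + (1 - l) * t' = s := by rw [hl]; field_simp; ring
  have key := hlc x₀ t' l hl0.le hl1.le
  rw [hcomb] at key
  have h2 : M' ^ l * c ^ (1 - l) ≤ f s := by
    calc M' ^ l * c ^ (1 - l) ≤ f x₀ ^ l * f t' ^ (1 - l) := by
          apply mul_le_mul (Real.rpow_le_rpow hM.le hfx hl0.le)
            (Real.rpow_le_rpow hc.le hft (by linarith)) (by positivity)
            (Real.rpow_nonneg (h0 x₀) _)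
      _ ≤ f s := key
  refine le_trans (le_of_eq ?_) h2
  rw [Real.log_div (ne_of_gt hM) (ne_of_gt hc), Real.rpow_def_of_pos hM,
    Real.rpow_def_of_pos hc, ← Real.exp_add]
  nth_rewrite 1 [← Real.exp_log hc]
  rw [← Real.exp_add]
  congr 1
  rw [hl]
  field_simp
  ring

lemma int_exp_integrableOn (b' k C : ℝ) (hk : 0 < k) :
    IntegrableOn (fun t => C * Real.exp (-(k * (t - b')))) (Ioi b') := by
  have : (fun t => C * Real.exp (-(k * (t - b')))) =
      fun t => (C * Real.exp (k * b')) * Real.exp (-k * t) := by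
    funext t; rw [mul_assoc, ← Real.exp_add]; ring_nf
  rw [this]
  exact (exp_neg_integrableOn_Ioi b' hk).const_mul _

example (c : ℝ) (hc : 0 < c) (k₂ : ℝ) (t' : ℝ) :
    IntegrableOn (fun s => c * Real.exp (k₂ * (t' - s))) (Ioo (0:ℝ) t') := by
  exact ((Continuous.integrableOn_Icc (by continuity))).mono_set Ioo_subset_Icc_self

section
variable (f : ℝ → ℝ)

lemma lemR (h0 : ∀ x, 0 ≤ f x) (hint : Integrable f)
    (hlc : ∀ x y l : ℝ, 0 ≤ l → l ≤ 1 →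
      f x ^ l * f y ^ (1 - l) ≤ f (l * x + (1 - l) * y))
    (x₀ b c M' : ℝ) (hxb : x₀ < b) (hc : 0 < c) (hcM : c < M')
    (hfx : M' ≤ f x₀) (hup : ∀ t, b < t → f t ≤ c)
    (hlow : ∀ s, s ∈ Ioo x₀ b → c ≤ f s) :
    (M' - c) * ∫ t in Ioi b, f t ≤ c * ∫ s in Ioo x₀ b, f s := by
  have hM : 0 < M' := hc.trans hcM
  set L := Real.log (M' / c) with hLdef
  have hL : 0 < L := Real.log_pos ((one_lt_div hc).2 hcM)
  -- Step C : upper bound for the tail integral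
  have IC : ∫ t in Ioi b, f t ≤ c * (b - x₀) / L := by
    have hev : ∀ b' ∈ Ioi b, ∫ t in Ioi b, f t ≤ c * (b' - b) + c * (b' - x₀) / L := by
      intro b' hb'
      rw [mem_Ioi] at hb'
      have hxb' : x₀ < b' := hxb.trans hb'
      have hbx' : 0 < b' - x₀ := by linarith
      set k := L / (b' - x₀) with hk
      have hk0 : 0 < k := div_pos hL hbx'
      have hsplit : ∫ t in Ioi b, f t =
          (∫ t in Ioc b b', f t) + ∫ t in Ioi b', f t := by
        rw [← setIntegral_union (Ioc_disjoint_Ioi le_rfl) measurableSet_Ioi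
          hint.integrableOn hint.integrableOn, Ioc_union_Ioi_eq_Ioi hb'.le]
      have h1 : ∫ t in Ioc b b', f t ≤ c * (b' - b) := by
        calc ∫ t in Ioc b b', f t ≤ ∫ _t in Ioc b b', c := by
              apply setIntegral_mono_on hint.integrableOn _ measurableSet_Ioc
                (fun t ht => hup t ht.1)
              exact integrableOn_const measure_Ioc_lt_top.ne
          _ = c * (b' - b) := by
              rw [setIntegral_const, Real.volume_real_Ioc, smul_eq_mul,
                max_eq_left (by linarith), mul_comm]
      have h2 : ∫ t in Ioi b', f t ≤ c * (b' - x₀) / L := by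
        calc ∫ t in Ioi b', f t
            ≤ ∫ t in Ioi b', c * Real.exp (-(k * (t - b'))) := by
              apply setIntegral_mono_on hint.integrableOn
                (int_exp_integrableOn b' k c hk0) measurableSet_Ioi
              intro t ht
              have := ptwise_upper f h0 hlc x₀ b' c M' hxb' hc hcM hfx
                (hup b' hb') t ht
              rwa [← hLdef, ← hk] at this
          _ = c / k := int_exp_Ioi b' k c hk0
          _ = c * (b' - x₀) / L := by rw [hk]; field_simp
      linarith
    have htend : Tendsto (fun b' => c * (b' - b) + c * (b' - x₀) / L) (𝓝[>] b)
        (𝓝 (c * (b - x₀) / L)) := by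
      have : Tendsto (fun b' => c * (b' - b) + c * (b' - x₀) / L) (𝓝 b)
          (𝓝 (c * (b - b) + c * (b - x₀) / L)) := by
        apply Tendsto.add
        · exact (tendsto_id.sub_const b).const_mul c
        · exact (((tendsto_id.sub_const x₀).const_mul c).div_const L)
      simpa using this.mono_left nhdsWithin_le_nhds
    exact ge_of_tendsto htend (eventually_nhdsWithin_of_forall hev)
  -- Step F : lower bound for the middle integral
  have IF : c * (b - x₀) * (M' / c - 1) / L ≤ ∫ s in Ioo x₀ b, f s := by
    have hev : ∀ t' ∈ Ioo x₀ b,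
        c * (t' - x₀) * (M' / c - 1) / L ≤ ∫ s in Ioo x₀ b, f s := by
      intro t' ht'
      have hxt : x₀ < t' := ht'.1
      have htx : 0 < t' - x₀ := by linarith
      set k₂ := L / (t' - x₀) with hk2
      have hk20 : 0 < k₂ := div_pos hL htx
      have hft' : c ≤ f t' := hlow t' ht'
      have e1 : c * (t' - x₀) * (M' / c - 1) / L =
          (c / k₂) * (Real.exp (k₂ * (t' - x₀)) - 1) := by
        have h5 : k₂ * (t' - x₀) = L := by rw [hk2]; field_simp
        rw [h5, hk2, hLdef, Real.exp_log (div_pos hM hc), div_div_eq_mul_div]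
        ring
      rw [e1, ← int_exp_Ioo x₀ t' k₂ c hxt hk20]
      calc ∫ s in Ioo x₀ t', c * Real.exp (k₂ * (t' - s))
          ≤ ∫ s in Ioo x₀ t', f s := by
            apply setIntegral_mono_on
              (((Continuous.integrableOn_Icc (by continuity))).mono_set
                Ioo_subset_Icc_self)
              (hint.integrableOn) measurableSet_Ioo
            intro s hs
            have := ptwise_lower f h0 hlc x₀ t' c M' hxt hc hcM hfx hft' s hs
            rwa [← hLdef, ← hk2] at this
        _ ≤ ∫ s in Ioo x₀ b, f s := by
            apply setIntegral_mono_set hint.integrableOn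
              (Filter.Eventually.filter_mono (ae_mono Measure.restrict_le_self)
                (ae_of_all _ h0))
            exact HasSubset.Subset.eventuallyLE (Ioo_subset_Ioo le_rfl ht'.2.le)
    have htend : Tendsto (fun t' => c * (t' - x₀) * (M' / c - 1) / L) (𝓝[<] b)
        (𝓝 (c * (b - x₀) * (M' / c - 1) / L)) := by
      apply Tendsto.mono_left _ nhdsWithin_le_nhds
      exact ((((tendsto_id.sub_const x₀).const_mul c).mul_const
        (M' / c - 1)).div_const L)
    refine le_of_tendsto htend ?_
    filter_upwards [Ioo_mem_nhdsLT_of_mem ⟨hxb, le_rfl⟩] using hev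
  -- combine
  calc (M' - c) * ∫ t in Ioi b, f t ≤ (M' - c) * (c * (b - x₀) / L) := by
        apply mul_le_mul_of_nonneg_left IC (by linarith)
    _ = c * (c * (b - x₀) * (M' / c - 1) / L) := by field_simp
    _ ≤ c * ∫ s in Ioo x₀ b, f s := mul_le_mul_of_nonneg_left IF hc.le

end

section
variable (f : ℝ → ℝ)

lemma mid_gt (hlc : ∀ x y l : ℝ, 0 ≤ l → l ≤ 1 →
      f x ^ l * f y ^ (1 - l) ≤ f (l * x + (1 - l) * y))
    {c x y t : ℝ} (hc : 0 < c) (hx : c < f x) (hy : c < f y)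
    (hxt : x < t) (hty : t < y) : c < f t := by
  set l := (y - t) / (y - x) with hl
  have hyx : 0 < y - x := by linarith
  have hl0 : 0 < l := div_pos (by linarith) hyx
  have hl1 : l < 1 := (div_lt_one hyx).2 (by linarith)
  have hcomb : l * x + (1 - l) * y = t := by rw [hl]; field_simp; ring
  have key := hlc x y l hl0.le hl1.le
  rw [hcomb] at key
  set m := min (f x) (f y) with hm
  have hcm : c < m := lt_min hx hy
  have hm0 : 0 < m := hc.trans hcm
  calc c < m := hcm
    _ = m ^ l * m ^ (1 - l) := by
        rw [← Real.rpow_add hm0]; simp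
    _ ≤ f x ^ l * f y ^ (1 - l) := by
        apply mul_le_mul (Real.rpow_le_rpow hm0.le (min_le_left _ _) hl0.le)
          (Real.rpow_le_rpow hm0.le (min_le_right _ _) (by linarith))
          (Real.rpow_nonneg hm0.le _) (Real.rpow_nonneg (hc.trans hx).le _)
    _ ≤ f t := key

lemma claimR (h0 : ∀ x, 0 ≤ f x) (hint : Integrable f)
    (hlc : ∀ x y l : ℝ, 0 ≤ l → l ≤ 1 →
      f x ^ l * f y ^ (1 - l) ≤ f (l * x + (1 - l) * y))
    (x₀ c M' : ℝ) (hc : 0 < c) (hcM : c < M') (hfx : M' < f x₀) :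
    M' * ∫ t in {t | x₀ < t ∧ f t ≤ c}, f t ≤ c * ∫ t in Ioi x₀, f t := by
  have hM : 0 < M' := hc.trans hcM
  have hRnn : 0 ≤ c * ∫ t in Ioi x₀, f t :=
    mul_nonneg hc.le (setIntegral_nonneg measurableSet_Ioi fun t _ => h0 t)
  set S := {t | x₀ < t ∧ f t ≤ c} with hSdef
  have hupS : ∀ t ∈ S, ∀ u, t ≤ u → u ∈ S := by
    intro t ht u htu
    rcases eq_or_lt_of_le htu with rfl | htu
    · exact ht
    · refine ⟨ht.1.trans htu, ?_⟩
      by_contra h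
      push_neg at h
      exact absurd ht.2 (not_le.2 (mid_gt f hlc hc (hcM.trans hfx) h ht.1 htu))
  rcases eq_empty_or_nonempty S with hSe | hne
  · rw [hSe]
    simp only [Measure.restrict_empty, integral_zero_measure, mul_zero]
    exact hRnn
  have hbdd : BddBelow S := ⟨x₀, fun t ht => ht.1.le⟩
  set b := sInf S with hbdef
  have hxlb : x₀ ≤ b := le_csInf hne fun t ht => ht.1.le
  have hIoiS : Ioi b ⊆ S := by
    intro t ht
    obtain ⟨s, hsS, hst⟩ := (csInf_lt_iff hbdd hne).1 ht
    exact hupS s hsS t hst.le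
  have haeq : S =ᵐ[volume] Ioi b := by
    apply MeasureTheory.ae_eq_set.2
    constructor
    · apply measure_mono_null _ (volume_singleton (a := b))
      intro t ⟨htS, htn⟩
      exact le_antisymm (not_lt.1 htn) (csInf_le hbdd htS)
    · rw [diff_eq_empty.2 hIoiS]; exact measure_empty
  have hS_int_eq : ∫ t in S, f t = ∫ t in Ioi b, f t := setIntegral_congr_set haeq
  have hupb : ∀ t, b < t → f t ≤ c := fun t ht => (hIoiS ht).2
  rcases eq_or_lt_of_le hxlb with hbx | hbx
  · -- b = x₀ : f vanishes on Ioi b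
    have hzero : ∀ t ∈ Ioi b, f t = 0 := by
      intro t ht
      rw [mem_Ioi] at ht
      by_contra hft0
      have hft : 0 < f t := lt_of_le_of_ne (h0 t) (Ne.symm hft0)
      have hftc : f t ≤ c := hupb t ht
      have hlog1 : Real.log (f t) ≤ Real.log c := Real.log_le_log hft hftc
      have hlog2 : Real.log c < Real.log M' := Real.log_lt_log hc hcM
      set r := (Real.log c - Real.log (f t)) / (Real.log M' - Real.log (f t)) with hr
      have hden : 0 < Real.log M' - Real.log (f t) := by linarith
      have hr0 : 0 ≤ r := div_nonneg (by linarith) hden.le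
      have hr1 : r < 1 := (div_lt_one hden).2 (by linarith)
      set l := (1 + r) / 2 with hldef
      have hl0 : 0 < l := by linarith
      have hl1 : l < 1 := by linarith
      have key := hlc x₀ t l hl0.le hl1.le
      set s := l * x₀ + (1 - l) * t with hs
      have hsx : x₀ < s := by
        rw [hs]; nlinarith
      have hsb : b < s := hbx ▸ hsx
      have hsc : f s ≤ c := hupb s hsb
      have hge : M' ^ l * f t ^ (1 - l) ≤ f s := by
        refine le_trans ?_ key
        apply mul_le_mul_of_nonneg_right _ (Real.rpow_nonneg (h0 t) _)
        exact Real.rpow_le_rpow hM.le hfx.le hl0.le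
      have hgt : c < M' ^ l * f t ^ (1 - l) := by
        rw [Real.rpow_def_of_pos hM, Real.rpow_def_of_pos hft, ← Real.exp_add,
          ← Real.exp_log hc]
        apply Real.exp_lt_exp.2
        have hrl : r < l := by linarith
        have := (div_lt_iff₀ hden).1 (show r < l from hrl)
        nlinarith [mul_lt_mul_of_pos_right hrl hden,
          (div_mul_cancel₀ (Real.log c - Real.log (f t)) (ne_of_gt hden) : r * (Real.log M' - Real.log (f t)) = Real.log c - Real.log (f t))]
      linarith
    have : ∫ t in Ioi b, f t = 0 := by
      rw [setIntegral_congr_fun measurableSet_Ioi hzero, integral_zero]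
    rw [hS_int_eq, this, mul_zero]
    exact hRnn
  · -- x₀ < b : apply lemR
    have hlow : ∀ s ∈ Ioo x₀ b, c ≤ f s := by
      intro s hs
      have hns : s ∉ S := fun h => absurd (csInf_le hbdd h) (not_le.2 hs.2)
      have : ¬ (f s ≤ c) := fun h => hns ⟨hs.1, h⟩
      linarith [not_le.1 this]
    have hR := lemR f h0 hint hlc x₀ b c M' hbx hc hcM hfx.le hupb hlow
    have hA : 0 ≤ ∫ t in Ioi b, f t :=
      setIntegral_nonneg measurableSet_Ioi fun t _ => h0 t
    have hdisj : Disjoint (Ioo x₀ b) (Ioi b) :=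
      disjoint_left.2 fun t h1 h2 => absurd h1.2 (not_lt.2 h2.le)
    have hunion : (∫ s in Ioo x₀ b, f s) + ∫ t in Ioi b, f t = ∫ t in Ioi x₀, f t := by
      rw [← setIntegral_union hdisj measurableSet_Ioi hint.integrableOn
        hint.integrableOn]
      apply setIntegral_congr_set
      apply MeasureTheory.ae_eq_set.2
      constructor
      · rw [diff_eq_empty.2 (union_subset Ioo_subset_Ioi_self (Ioi_subset_Ioi hbx.le))]
        exact measure_empty
      · apply measure_mono_null _ (volume_singleton (a := b))
        rintro t ⟨ht1, ht2⟩
        simp only [mem_union, mem_Ioo, mem_Ioi, not_or, not_and, not_lt] at ht2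
        rw [mem_Ioi] at ht1
        exact le_antisymm ht2.2 (ht2.1 ht1)
    rw [hS_int_eq]
    rw [← hunion]
    nlinarith [hR, hA]
end
section
variable (f : ℝ → ℝ)

lemma claimL (h0 : ∀ x, 0 ≤ f x) (hint : Integrable f)
    (hlc : ∀ x y l : ℝ, 0 ≤ l → l ≤ 1 →
      f x ^ l * f y ^ (1 - l) ≤ f (l * x + (1 - l) * y))
    (x₀ c M' : ℝ) (hc : 0 < c) (hcM : c < M') (hfx : M' < f x₀) :
    M' * ∫ t in {t | t < x₀ ∧ f t ≤ c}, f t ≤ c * ∫ t in Iio x₀, f t := by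
  set g : ℝ → ℝ := fun x => f (-x) with hg
  have hg0 : ∀ x, 0 ≤ g x := fun x => h0 (-x)
  have hgint : Integrable g := hint.comp_neg
  have hglc : ∀ x y l : ℝ, 0 ≤ l → l ≤ 1 →
      g x ^ l * g y ^ (1 - l) ≤ g (l * x + (1 - l) * y) := by
    intro x y l hl0 hl1
    calc g x ^ l * g y ^ (1 - l) = f (-x) ^ l * f (-y) ^ (1 - l) := rfl
      _ ≤ f (l * -x + (1 - l) * -y) := hlc (-x) (-y) l hl0 hl1
      _ = g (l * x + (1 - l) * y) := by
          show _ = f (-(l * x + (1 - l) * y))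
          congr 1; ring
  have hgx : M' < g (-x₀) := by simpa [hg] using hfx
  have hclaim := claimR g hg0 hgint hglc (-x₀) c M' hc hcM hgx
  have he1 : ∫ t in {t | -x₀ < t ∧ g t ≤ c}, g t = ∫ t in {t | t < x₀ ∧ f t ≤ c}, f t := by
    have himg : Neg.neg '' {t : ℝ | -x₀ < t ∧ g t ≤ c} = {t : ℝ | t < x₀ ∧ f t ≤ c} := by
      ext y
      simp only [mem_image, mem_setOf_eq, hg]
      constructor
      · rintro ⟨t, ⟨h1, h2⟩, rfl⟩
        exact ⟨by linarith, by simpa using h2⟩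
      · rintro ⟨h1, h2⟩
        exact ⟨-y, ⟨by linarith, by simpa using h2⟩, by simp⟩
    rw [← himg, (Measure.measurePreserving_neg (volume : Measure ℝ)).setIntegral_image_emb
      measurableEmbedding_neg f _]
  have he2 : ∫ t in Ioi (-x₀), g t = ∫ t in Iio x₀, f t := by
    have himg : Neg.neg '' Ioi (-x₀) = Iio x₀ := by
      ext y; simp only [mem_image, mem_Ioi, mem_Iio]
      constructor
      · rintro ⟨t, h1, rfl⟩; linarith
      · intro h; exact ⟨-y, by linarith, by simp⟩
    rw [← himg, (Measure.measurePreserving_neg (volume : Measure ℝ)).setIntegral_image_emb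
      measurableEmbedding_neg f _]
  rw [he1, he2] at hclaim
  exact hclaim

end

/-- if `X` has a logconcave density `f` with maximum value `M > 0`,
then for every `c > 0`, `P(f(X) ≤ c) ≤ c / M`. -/
theorem stmt3 (f : ℝ → ℝ) (M : ℝ)
    (hf_nonneg : ∀ x, 0 ≤ f x)
    (hf_density : ∫ x, f x = 1)
    (hf_logconcave : ∀ x y l : ℝ, 0 ≤ l → l ≤ 1 →
      f x ^ l * f y ^ (1 - l) ≤ f (l * x + (1 - l) * y))
    (hM : IsLUB (Set.range f) M) (hMpos : 0 < M) :
    ∀ c : ℝ, 0 < c → ∫ x in {x : ℝ | f x ≤ c}, f x ≤ c / M := by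
  intro c hc
  have hint : Integrable f := by
    by_contra h
    rw [MeasureTheory.integral_undef h] at hf_density
    norm_num at hf_density
  rcases le_or_gt M c with hMc | hcM
  · calc ∫ x in {x : ℝ | f x ≤ c}, f x ≤ ∫ x, f x :=
        setIntegral_le_integral hint (Filter.Eventually.of_forall hf_nonneg)
      _ = 1 := hf_density
      _ ≤ c / M := by rw [le_div_iff₀ hMpos]; linarith
  · set I := ∫ x in {x : ℝ | f x ≤ c}, f x with hI
    have hI0 : 0 ≤ I := MeasureTheory.integral_nonneg hf_nonneg
    have key : ∀ M' ∈ Ioo c M, M' * I ≤ c := by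
      rintro M' ⟨hcM', hM'M⟩
      obtain ⟨x₀, hx₀⟩ : ∃ x, M' < f x := by
        by_contra h
        push_neg at h
        have : M ≤ M' := hM.2 (by rintro y ⟨x, rfl⟩; exact h x)
        linarith
      have hA : IntegrableOn f {x : ℝ | f x ≤ c} := hint.integrableOn
      have hsplit : I = (∫ t in {t | t < x₀ ∧ f t ≤ c}, f t)
          + ∫ t in {t | x₀ < t ∧ f t ≤ c}, f t := by
        have h1 := MeasureTheory.integral_add_compl (measurableSet_Iio (a := x₀)) hA
        have h2 : (volume.restrict {x : ℝ | f x ≤ c}).restrict (Iio x₀)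
            = volume.restrict {t : ℝ | t < x₀ ∧ f t ≤ c} := by
          rw [Measure.restrict_restrict measurableSet_Iio]
          congr 1
        have h3 : (volume.restrict {x : ℝ | f x ≤ c}).restrict (Iio x₀)ᶜ
            = volume.restrict {t : ℝ | x₀ < t ∧ f t ≤ c} := by
          rw [Measure.restrict_restrict measurableSet_Iio.compl]
          congr 1
          ext t
          simp only [compl_Iio, mem_inter_iff, mem_Ici, mem_setOf_eq]
          constructor
          · rintro ⟨h4, h5⟩
            refine ⟨lt_of_le_of_ne h4 ?_, h5⟩
            rintro rfl
            linarith
          · rintro ⟨h4, h5⟩; exact ⟨h4.le, h5⟩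
        rw [hI, ← h1]
        congr 1
        · exact (congrArg (fun μ => ∫ x, f x ∂μ) h2)
        · exact (congrArg (fun μ => ∫ x, f x ∂μ) h3)
      have hL := claimL f hf_nonneg hint hf_logconcave x₀ c M' hc hcM' hx₀
      have hR := claimR f hf_nonneg hint hf_logconcave x₀ c M' hc hcM' hx₀
      have htot : (∫ t in Iio x₀, f t) + ∫ t in Ioi x₀, f t = 1 := by
        rw [← hf_density]
        have h1 := MeasureTheory.integral_add_compl (measurableSet_Iio (a := x₀)) hint
        rw [← h1]
        congr 1
        rw [compl_Iio]
        exact setIntegral_congr_set Ioi_ae_eq_Ici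
      nlinarith [hL, hR, htot, hsplit]
    have hMI : M * I ≤ c := by
      have ht : Tendsto (fun M' => M' * I) (𝓝[<] M) (𝓝 (M * I)) :=
        (tendsto_id.mul_const I).mono_left nhdsWithin_le_nhds
      apply le_of_tendsto ht
      filter_upwards [Ioo_mem_nhdsLT_of_mem ⟨hcM, le_rfl⟩] with M' hM' using key M' hM'
    rw [le_div_iff₀ hMpos]
    linarith
end

section
/- Let f : ℝ^s → ℝ_+ be an isotropic logconcave density (mean 0, identity covariance). Then the maximum value of f satisfies M_f ≥ (4eπ)^{-s/2}. -/
set_option maxHeartbeats 1000000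

open MeasureTheory

section Aux

open Real Filter Topology Nat

lemma stirling_lb (m : ℕ) (hm : 1 ≤ m) : √π * (√(2*m) * ((m/exp 1))^m) ≤ m ! := by
  obtain ⟨n, rfl⟩ : ∃ n, m = n + 1 := ⟨m - 1, (Nat.succ_pred_eq_of_pos hm).symm⟩
  have h1 : Tendsto (Stirling.stirlingSeq ∘ Nat.succ) atTop (𝓝 (√π)) :=
    Stirling.tendsto_stirlingSeq_sqrt_pi.comp (tendsto_add_atTop_nat 1)
  have h2 : √π ≤ Stirling.stirlingSeq (n+1) :=
    Stirling.stirlingSeq'_antitone.le_of_tendsto h1 n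
  rw [Stirling.stirlingSeq] at h2
  have hD : 0 < √(2*(n+1:ℕ)) * (((n+1:ℕ):ℝ)/exp 1)^(n+1) := by positivity
  rw [le_div_iff₀ hD] at h2
  exact h2

lemma gautschi (m : ℕ) : √((m:ℝ)+1/2) * m ! ≤ Real.Gamma ((m:ℝ)+1/2+1) := by
  set x : ℝ := (m:ℝ)+1/2 with hxdef
  have hx : (0:ℝ) < x := by positivity
  have hx1 : (0:ℝ) < x + 1 := by positivity
  have hΓx : 0 < Real.Gamma x := Real.Gamma_pos_of_pos hx
  have hΓx1 : 0 < Real.Gamma (x+1) := Real.Gamma_pos_of_pos hx1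
  have hrec : Real.Gamma (x+1) = x * Real.Gamma x := Real.Gamma_add_one (ne_of_gt hx)
  have hcx := Real.convexOn_log_Gamma.2 (Set.mem_Ioi.mpr hx) (Set.mem_Ioi.mpr hx1)
    (by norm_num : (0:ℝ) ≤ 1/2) (by norm_num : (0:ℝ) ≤ 1/2) (by norm_num)
  simp only [Function.comp, smul_eq_mul] at hcx
  rw [(by ring : (1/2:ℝ)*x + (1/2)*(x+1) = x + 1/2)] at hcx
  have hmid : x + 1/2 = (m:ℝ) + 1 := by rw [hxdef]; ring
  rw [hmid] at hcx
  rw [Real.Gamma_nat_eq_factorial m] at hcx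
  have hfac : (0:ℝ) < m ! := by positivity
  -- hcx : log (m!) ≤ 1/2 * log (Γ x) + 1/2 * log (Γ (x+1))
  have hlogx : Real.log (Real.Gamma x) = Real.log (Real.Gamma (x+1)) - Real.log x := by
    rw [hrec, Real.log_mul (ne_of_gt hx) (ne_of_gt hΓx)]; ring
  rw [hlogx] at hcx
  have key : Real.log (√x * m !) ≤ Real.log (Real.Gamma (x+1)) := by
    rw [Real.log_mul (by positivity) (ne_of_gt hfac), Real.log_sqrt hx.le]
    linarith
  have := (Real.log_le_log_iff (by positivity) hΓx1).mp key
  exact this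

lemma le_of_sq_le' {a b : ℝ} (hb : 0 ≤ b) (h : a^2 ≤ b^2) (ha : 0 ≤ a) : a ≤ b := by nlinarith

lemma exp_pow_bound (m : ℕ) (hm : 1 ≤ m) : ((m:ℝ)+1)^m ≤ exp 1 * (m:ℝ)^m := by
  have hm0 : (0:ℝ) < m := by exact_mod_cast hm
  have h1 : (m:ℝ)+1 ≤ m * exp (1/m) := by
    calc (m:ℝ)+1 = m * (1 + 1/m) := by field_simp
      _ ≤ m * exp (1/m) := by nlinarith [add_one_le_exp (1/(m:ℝ))]
  calc ((m:ℝ)+1)^m ≤ (m * exp (1/m))^m := pow_le_pow_left₀ (by positivity) h1 m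
    _ = (m:ℝ)^m * exp ((m:ℕ) * (1/m)) := by rw [mul_pow, Real.exp_nat_mul]
    _ = exp 1 * (m:ℝ)^m := by rw [mul_one_div, div_self (ne_of_gt hm0)]; ring

-- squared Stirling, convenient form

lemma stirling_sq (m : ℕ) (hm : 1 ≤ m) :
    π * (2*(m:ℝ)) * ((m:ℝ)^m)^2 ≤ ((m ! : ℝ))^2 * (exp 1 ^ m)^2 := by
  have hst := stirling_lb m hm
  have hst2 : (√π * (√(2*(m:ℝ)) * (((m:ℝ)/exp 1))^m))^2 ≤ ((m ! :ℝ))^2 :=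
    pow_le_pow_left₀ (by positivity) hst 2
  have hK : (0:ℝ) < exp 1 ^ m := by positivity
  have hexpand : (√π * (√(2*(m:ℝ)) * (((m:ℝ)/exp 1))^m))^2
      = π * (2*(m:ℝ)) * ((m:ℝ)^m)^2 / (exp 1 ^ m)^2 := by
    rw [mul_pow, mul_pow, sq_sqrt pi_nonneg, sq_sqrt (by positivity : (0:ℝ) ≤ 2*(m:ℝ)),
      div_pow, ← pow_mul, ← pow_mul, mul_comm m 2, pow_mul, pow_mul]
    ring
  rw [hexpand, div_le_iff₀ (by positivity)] at hst2
  exact hst2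

lemma exp_sq_lt : (exp 1)^2 ≤ 7.3890561 := by nlinarith [exp_one_lt_d9, exp_pos 1]

lemma E1 (m : ℕ) (hm : 1 ≤ m) :
    2*((m:ℝ)+1)^(m+1) ≤ ((m:ℝ)+2) * m ! * exp 1 ^ m := by
  have he1 : (2.7182818283:ℝ) < exp 1 := exp_one_gt_d9
  by_cases hm4 : m ≤ 3
  · have he2 : (7.389056098:ℝ) < rexp 1 ^ 2 := by nlinarith
    have he3 : (20.0855369:ℝ) < rexp 1 ^ 3 := by nlinarith [exp_pos 1]
    interval_cases m
    · norm_num [Nat.factorial]; nlinarith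
    · norm_num [Nat.factorial]
      rw [show (2:ℝ) = ((2:ℕ):ℝ)*1 by norm_num, Real.exp_nat_mul]; nlinarith
    · norm_num [Nat.factorial]
      rw [show (3:ℝ) = ((3:ℕ):ℝ)*1 by norm_num, Real.exp_nat_mul]; nlinarith
  · push_neg at hm4
    have hm4' : (4:ℝ) ≤ (m:ℝ) := by exact_mod_cast hm4
    have hmr : (0:ℝ) < m := by linarith
    apply le_of_sq_le' (by positivity)
    · have hA : (2*((m:ℝ)+1)^(m+1))^2 = 4*((m:ℝ)+1)^2*(((m:ℝ)+1)^m)^2 := by ring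
      have hB : (((m:ℝ)+2) * m ! * exp 1 ^ m)^2 = ((m:ℝ)+2)^2 * (((m !:ℝ))^2 * (exp 1^m)^2) := by
        ring
      rw [hA, hB]
      have hexp2 : (((m:ℝ)+1)^m)^2 ≤ (exp 1)^2 * ((m:ℝ)^m)^2 := by
        nlinarith [exp_pow_bound m hm, pow_nonneg (by positivity : (0:ℝ) ≤ (m:ℝ)+1) m,
          pow_nonneg hmr.le m, exp_pos 1]
      have hst := stirling_sq m hm
      have ht : (0:ℝ) ≤ (m:ℝ) - 4 := by linarith
      have hfinal : 4*((m:ℝ)+1)^2*(exp 1)^2 ≤ ((m:ℝ)+2)^2 * (π * (2*(m:ℝ))) := by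
        nlinarith [pi_gt_d6, exp_sq_lt, ht, mul_nonneg ht ht,
          mul_nonneg (mul_nonneg ht ht) ht]
      calc 4*((m:ℝ)+1)^2*(((m:ℝ)+1)^m)^2 ≤ 4*((m:ℝ)+1)^2*((exp 1)^2 * ((m:ℝ)^m)^2) := by
            nlinarith [sq_nonneg ((m:ℝ)+1)]
        _ = (4*((m:ℝ)+1)^2*(exp 1)^2) * ((m:ℝ)^m)^2 := by ring
        _ ≤ (((m:ℝ)+2)^2 * (π * (2*(m:ℝ)))) * ((m:ℝ)^m)^2 :=
            mul_le_mul_of_nonneg_right hfinal (by positivity)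
        _ = ((m:ℝ)+2)^2 * (π * (2*(m:ℝ)) * ((m:ℝ)^m)^2) := by ring
        _ ≤ ((m:ℝ)+2)^2 * (((m !:ℝ))^2 * (exp 1^m)^2) :=
            mul_le_mul_of_nonneg_left hst (by positivity)
    · positivity

lemma E2 (m : ℕ) (hm : 1 ≤ m) :
    4*((m:ℝ)+1)^(m+1)*√((m:ℝ)+1) ≤
      (2*(m:ℝ)+3) * (√((m:ℝ)+1/2) * m !) * (exp 1 ^ m * √(exp 1)) := by
  have he1 : (2.7182818283:ℝ) < exp 1 := exp_one_gt_d9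
  apply le_of_sq_le' (by positivity)
  · have hA : (4*((m:ℝ)+1)^(m+1)*√((m:ℝ)+1))^2
        = 16*(((m:ℝ)+1)^m)^2*((m:ℝ)+1)^3 := by
      rw [mul_pow, mul_pow, sq_sqrt (by positivity : (0:ℝ) ≤ (m:ℝ)+1)]; ring
    have hB : ((2*(m:ℝ)+3) * (√((m:ℝ)+1/2) * m !) * (exp 1 ^ m * √(exp 1)))^2
        = (2*(m:ℝ)+3)^2 * (((m:ℝ)+1/2) * ((m !:ℝ))^2 * ((exp 1^m)^2 * exp 1)) := by
      rw [mul_pow, mul_pow, mul_pow, mul_pow, sq_sqrt (by positivity : (0:ℝ) ≤ (m:ℝ)+1/2),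
        sq_sqrt (exp_pos 1).le]
      ring
    rw [hA, hB]
    by_cases hm2 : m ≤ 1
    · interval_cases m
      norm_num [Nat.factorial]
      have h2 : rexp 2 = rexp 1^2 := by
        rw [show (2:ℝ)=((2:ℕ):ℝ)*1 by norm_num, exp_nat_mul]
      rw [h2]; nlinarith [exp_pos 1]
    · push_neg at hm2
      have hm2' : (2:ℝ) ≤ (m:ℝ) := by exact_mod_cast hm2
      have hmr : (0:ℝ) < m := by linarith
      have hexp2 : (((m:ℝ)+1)^m)^2 ≤ (exp 1)^2 * ((m:ℝ)^m)^2 := by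
        nlinarith [exp_pow_bound m hm, pow_nonneg (by positivity : (0:ℝ) ≤ (m:ℝ)+1) m,
          pow_nonneg hmr.le m, exp_pos 1]
      have hst := stirling_sq m hm
      have ht : (0:ℝ) ≤ (m:ℝ) - 2 := by linarith
      have hfinal : 16*((m:ℝ)+1)^3*(exp 1)^2 ≤
          (2*(m:ℝ)+3)^2 * (((m:ℝ)+1/2) * (π * (2*(m:ℝ))) * exp 1) := by
        have he2 : exp 1 ≤ 2.7182818286 := exp_one_lt_d9.le
        have hkey : 16*((m:ℝ)+1)^3 * 2.7182818286 ≤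
            (2*(m:ℝ)+3)^2 * (((m:ℝ)+1/2) * (π * (2*(m:ℝ)))) := by
          nlinarith [pi_gt_d6, ht, mul_nonneg ht ht, mul_nonneg (mul_nonneg ht ht) ht,
            mul_nonneg (mul_nonneg (mul_nonneg ht ht) ht) ht]
        nlinarith [exp_pos 1, mul_le_mul_of_nonneg_right he2
          (by positivity : (0:ℝ) ≤ 16*((m:ℝ)+1)^3), sq_nonneg ((m:ℝ)+1)]
      calc 16*(((m:ℝ)+1)^m)^2*((m:ℝ)+1)^3
          ≤ 16*((exp 1)^2 * ((m:ℝ)^m)^2)*((m:ℝ)+1)^3 := by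
            apply mul_le_mul_of_nonneg_right _ (by positivity)
            exact mul_le_mul_of_nonneg_left hexp2 (by norm_num)
        _ = (16*((m:ℝ)+1)^3*(exp 1)^2) * ((m:ℝ)^m)^2 := by ring
        _ ≤ ((2*(m:ℝ)+3)^2 * (((m:ℝ)+1/2) * (π * (2*(m:ℝ))) * exp 1)) * ((m:ℝ)^m)^2 :=
            mul_le_mul_of_nonneg_right hfinal (by positivity)
        _ = ((2*(m:ℝ)+3)^2 * ((m:ℝ)+1/2) * exp 1) * (π * (2*(m:ℝ)) * ((m:ℝ)^m)^2) := by ring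
        _ ≤ ((2*(m:ℝ)+3)^2 * ((m:ℝ)+1/2) * exp 1) * (((m !:ℝ))^2 * (exp 1^m)^2) :=
            mul_le_mul_of_nonneg_left hst (by positivity)
        _ = (2*(m:ℝ)+3)^2 * (((m:ℝ)+1/2) * ((m !:ℝ))^2 * ((exp 1^m)^2 * exp 1)) := by ring
  · positivity

lemma GIcase (s : ℕ) (hs : 1 ≤ s) : ∃ R : ℝ, 0 < R ∧
    R^s ≤ (1 - s/R^2) * Real.Gamma ((s:ℝ)/2+1) * (2*√(exp 1))^s := by
  have hsq : (2*√(exp 1))^2 = 4*exp 1 := by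
    rw [mul_pow, sq_sqrt (exp_pos 1).le]; norm_num
  rcases Nat.even_or_odd' s with ⟨m, hpar | hpar⟩
  · -- s = 2m, m ≥ 1
    have hm : 1 ≤ m := by omega
    have hm0 : (0:ℝ) < (m:ℝ)+1 := by positivity
    refine ⟨2*√((m:ℝ)+1), by positivity, ?_⟩
    have hR2 : (2*√((m:ℝ)+1))^2 = 4*((m:ℝ)+1) := by
      rw [mul_pow, sq_sqrt hm0.le]; norm_num
    subst hpar
    rw [hR2, pow_mul, pow_mul, hR2, hsq]
    have hΓ : ((2*m:ℕ):ℝ)/2+1 = (m:ℝ)+1 := by push_cast; ring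
    rw [hΓ, Real.Gamma_nat_eq_factorial m]
    have hco : 1 - ((2*m:ℕ):ℝ)/(4*((m:ℝ)+1)) = ((m:ℝ)+2)/(2*((m:ℝ)+1)) := by
      push_cast; field_simp; ring
    rw [hco, div_mul_eq_mul_div, div_mul_eq_mul_div, le_div_iff₀ (by positivity)]
    have key := mul_le_mul_of_nonneg_left (E1 m hm) (by positivity : (0:ℝ) ≤ (4:ℝ)^m)
    calc (4*((m:ℝ)+1))^m * (2*((m:ℝ)+1)) = (4:ℝ)^m * (2*((m:ℝ)+1)^(m+1)) := by
          rw [mul_pow]; ring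
      _ ≤ (4:ℝ)^m * (((m:ℝ)+2) * m ! * exp 1 ^ m) := key
      _ = ((m:ℝ)+2) * (m !) * (4*exp 1)^m := by rw [mul_pow]; ring
  · -- s = 2m+1
    rcases Nat.eq_zero_or_pos m with rfl | hm
    · -- s = 1
      refine ⟨√3, by positivity, ?_⟩
      subst hpar
      norm_num
      have hΓ : Real.Gamma ((3:ℝ)/2) = √π/2 := by
        rw [show (3:ℝ)/2 = 1/2+1 by norm_num, Real.Gamma_add_one (by norm_num),
          Real.Gamma_one_half_eq]
        ring
      rw [hΓ]
      apply le_of_sq_le' (by positivity)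
      · rw [mul_pow, mul_pow, mul_pow, div_pow, div_pow, sq_sqrt pi_nonneg,
          sq_sqrt (exp_pos 1).le, sq_sqrt (by norm_num : (0:ℝ) ≤ 3)]
        nlinarith [pi_gt_d6, exp_one_gt_d9]
      · positivity
    · have hm0 : (0:ℝ) < (m:ℝ)+1 := by positivity
      refine ⟨2*√((m:ℝ)+1), by positivity, ?_⟩
      have hR2 : (2*√((m:ℝ)+1))^2 = 4*((m:ℝ)+1) := by
        rw [mul_pow, sq_sqrt hm0.le]; norm_num
      subst hpar
      rw [hR2]
      have hΓ : ((2*m+1:ℕ):ℝ)/2+1 = (m:ℝ)+1/2+1 := by push_cast; ring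
      rw [hΓ]
      have hco : 1 - ((2*m+1:ℕ):ℝ)/(4*((m:ℝ)+1)) = (2*(m:ℝ)+3)/(4*((m:ℝ)+1)) := by
        push_cast; field_simp; ring
      rw [hco, pow_succ, pow_mul, hR2, pow_succ, pow_mul, hsq]
      have hG := gautschi m
      have key := mul_le_mul_of_nonneg_left (E2 m hm) (by positivity : (0:ℝ) ≤ 2*(4:ℝ)^m)
      have step1 : (4*((m:ℝ)+1))^m * (2*√((m:ℝ)+1)) ≤
          (2*(m:ℝ)+3)/(4*((m:ℝ)+1)) * (√((m:ℝ)+1/2) * m !) * ((4*exp 1)^m * (2*√(exp 1))) := by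
        rw [div_mul_eq_mul_div, div_mul_eq_mul_div, le_div_iff₀ (by positivity)]
        calc (4*((m:ℝ)+1))^m * (2*√((m:ℝ)+1)) * (4*((m:ℝ)+1))
            = (2*(4:ℝ)^m) * (4*((m:ℝ)+1)^(m+1)*√((m:ℝ)+1)) := by rw [mul_pow]; ring
          _ ≤ (2*(4:ℝ)^m) * ((2*(m:ℝ)+3) * (√((m:ℝ)+1/2) * m !) * (exp 1 ^ m * √(exp 1))) := key
          _ = (2*(m:ℝ)+3) * (√((m:ℝ)+1/2) * m !) * ((4*exp 1)^m * (2*√(exp 1))) := by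
              rw [mul_pow]; ring
      refine step1.trans ?_
      apply mul_le_mul_of_nonneg_right _ (by positivity)
      exact mul_le_mul_of_nonneg_left hG (by positivity)

lemma vol_qball (s : ℕ) (hs : 0 < s) (R : ℝ) (hR : 0 < R) :
    volume {x : Fin s → ℝ | ∑ i, x i * x i ≤ R^2}
      = ENNReal.ofReal (R^s * (√π^s / Real.Gamma ((s:ℝ)/2+1))) := by
  have : Nonempty (Fin s) := ⟨⟨0, hs⟩⟩
  have hpre : {x : Fin s → ℝ | ∑ i, x i * x i ≤ R^2}
      = (WithLp.toLp 2 : (Fin s → ℝ) → EuclideanSpace ℝ (Fin s)) ⁻¹' (Metric.closedBall 0 R) := by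
    ext x
    simp only [Set.mem_setOf_eq, Set.mem_preimage, Metric.mem_closedBall,
      EuclideanSpace.dist_eq, PiLp.toLp_apply, PiLp.zero_apply, sub_zero]
    rw [Real.sqrt_le_iff]
    constructor
    · intro h; exact ⟨hR.le, by simpa [sq] using h⟩
    · intro h; simpa [sq] using h.2
  rw [hpre, (PiLp.volume_preserving_toLp (Fin s)).measure_preimage
    measurableSet_closedBall.nullMeasurableSet,
    EuclideanSpace.volume_closedBall, Fintype.card_fin]
  rw [← ENNReal.ofReal_pow hR.le, ← ENNReal.ofReal_mul (by positivity)]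

end Aux

open Real Filter Topology Nat in
/-- an isotropic logconcave density `f` on `ℝ^s` (mean 0, identity
covariance) has maximum value `M_f ≥ (4eπ)^{-s/2}`. -/
theorem stmt7 (s : ℕ) (f : (Fin s → ℝ) → ℝ) (M : ℝ)
    (hf_nonneg : ∀ x, 0 ≤ f x)
    (hf_density : ∫ x, f x = 1)
    (hf_logconcave : ∀ x y : Fin s → ℝ, ∀ l : ℝ, 0 ≤ l → l ≤ 1 →
      f x ^ l * f y ^ (1 - l) ≤ f (l • x + (1 - l) • y))
    (hmean : ∀ i, ∫ x, x i * f x = 0)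
    (hcov : ∀ i j, ∫ x, x i * x j * f x = if i = j then 1 else 0)
    (hM : IsLUB (Set.range f) M) :
    (4 * Real.exp 1 * Real.pi) ^ (-(s : ℝ) / 2) ≤ M := by
  rcases Nat.eq_zero_or_pos s with rfl | hs
  · -- s = 0
    simp only [Nat.cast_zero, neg_zero, zero_div, Real.rpow_zero]
    have huniv : (volume (Set.univ : Set (Fin 0 → ℝ))) = 1 := by
      simp [MeasureTheory.volume_pi, Measure.pi_univ]
    have h1 : ∫ x : Fin 0 → ℝ, f x = f default := by
      rw [MeasureTheory.integral_unique, measureReal_def, huniv]; simp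
      exact congrArg f (Subsingleton.elim _ _)
    rw [h1] at hf_density
    exact hf_density ▸ hM.1 ⟨default, rfl⟩
  · obtain ⟨R, hR, hGI⟩ := GIcase s hs
    have hΓpos : 0 < Real.Gamma ((s:ℝ)/2+1) := Real.Gamma_pos_of_pos (by positivity)
    set V : ℝ := R^s * (√π^s / Real.Gamma ((s:ℝ)/2+1)) with hVdef
    have hVpos : 0 < V := by
      apply mul_pos (by positivity) (_root_.div_pos (by positivity) hΓpos)
    set B : Set (Fin s → ℝ) := {x | ∑ i, x i * x i ≤ R^2} with hBdef
    have hvol : volume B = ENNReal.ofReal V := vol_qball s hs R hR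
    have hBmeas : MeasurableSet B := by
      apply measurableSet_le _ measurable_const
      exact Finset.measurable_sum _ (fun i _ => ((measurable_pi_apply i).mul (measurable_pi_apply i)))
    -- integrability
    have hfi : Integrable f := by
      by_contra hc; rw [integral_undef hc] at hf_density; norm_num at hf_density
    have hii : ∀ i, Integrable (fun x : Fin s → ℝ => x i * x i * f x) := by
      intro i
      by_contra hc
      have h := hcov i i
      rw [integral_undef hc] at h; simp at h
    have hgi : Integrable (fun x : Fin s → ℝ => (∑ i, x i * x i) * f x) := by
      have := integrable_finset_sum (μ := volume) Finset.univ (fun i _ => hii i)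
      simpa [Finset.sum_mul] using this
    have hgval : ∫ x : Fin s → ℝ, (∑ i, x i * x i) * f x = s := by
      simp_rw [Finset.sum_mul]
      rw [integral_finset_sum _ (fun i _ => hii i)]
      simp [hcov]
    -- splitting
    have hsplit : (∫ x in B, f x) + ∫ x in Bᶜ, f x = 1 := by
      rw [integral_add_compl hBmeas hfi, hf_density]
    have h1 : ∫ x in B, f x ≤ M * V := by
      have hb : ∀ x ∈ B, ‖f x‖ ≤ M := fun x _ => by
        rw [Real.norm_of_nonneg (hf_nonneg x)]; exact hM.1 ⟨x, rfl⟩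
      have := norm_setIntegral_le_of_norm_le_const (by rw [hvol]; exact ENNReal.ofReal_lt_top)
        hb
      rw [measureReal_def, hvol, ENNReal.toReal_ofReal hVpos.le] at this
      exact (le_abs_self _).trans this
    have h2 : ∫ x in Bᶜ, f x ≤ s / R^2 := by
      have hmono : ∫ x in Bᶜ, f x ≤ ∫ x in Bᶜ, (∑ i, x i * x i) * f x / R^2 := by
        apply setIntegral_mono_on hfi.integrableOn (hgi.div_const _).integrableOn hBmeas.compl
        intro x hx
        have hx' : R^2 < ∑ i, x i * x i := by
          simpa [hBdef] using hx
        rw [le_div_iff₀ (by positivity)]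
        calc f x * R^2 ≤ f x * (∑ i, x i * x i) := by
              apply mul_le_mul_of_nonneg_left hx'.le (hf_nonneg x)
          _ = (∑ i, x i * x i) * f x := by ring
      refine hmono.trans ?_
      rw [integral_div]
      have hle : ∫ x in Bᶜ, (∑ i, x i * x i) * f x ≤ ∫ x : Fin s → ℝ, (∑ i, x i * x i) * f x :=
        setIntegral_le_integral hgi (ae_of_all _ fun x =>
          mul_nonneg (Finset.sum_nonneg fun i _ => mul_self_nonneg _) (hf_nonneg x))
      rw [hgval] at hle
      gcongr
    -- combine
    have hM1 : (1:ℝ) ≤ M * V + s/R^2 := by linarith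
    set a : ℝ := 2*√(exp 1)*√π with hadef
    have ha : 0 < a := by positivity
    have ha2 : (4*exp 1*π : ℝ) = a^2 := by
      rw [hadef, mul_pow, mul_pow, sq_sqrt (exp_pos 1).le, sq_sqrt pi_nonneg]; ring
    have hT : (4*exp 1*π : ℝ) ^ (-(s:ℝ)/2) = (a^s)⁻¹ := by
      rw [ha2, ← Real.rpow_natCast a 2, ← Real.rpow_mul ha.le,
        show ((2:ℕ):ℝ)*(-(s:ℝ)/2) = -(s:ℝ) by push_cast; ring,
        Real.rpow_neg ha.le, Real.rpow_natCast]
    have has : a^s = (2*√(exp 1))^s * √π^s := by rw [hadef, mul_pow]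
    have hTV : (a^s)⁻¹ * V ≤ 1 - s/R^2 := by
      have hGI' : V ≤ (1 - s/R^2) * ((2*√(exp 1))^s * √π^s) := by
        have h := mul_le_mul_of_nonneg_right hGI
          (div_nonneg (by positivity : (0:ℝ) ≤ √π^s) hΓpos.le)
        rw [hVdef]
        calc R^s * (√π^s / Real.Gamma ((s:ℝ)/2+1))
            ≤ (1 - s/R^2) * Real.Gamma ((s:ℝ)/2+1) * (2*√(exp 1))^s
              * (√π^s / Real.Gamma ((s:ℝ)/2+1)) := h
          _ = (1 - s/R^2) * ((2*√(exp 1))^s * √π^s) := by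
              field_simp
      calc (a^s)⁻¹ * V ≤ (a^s)⁻¹ * ((1 - s/R^2) * ((2*√(exp 1))^s * √π^s)) := by
            apply mul_le_mul_of_nonneg_left hGI' (by positivity)
        _ = 1 - s/R^2 := by
            rw [has]; field_simp
    rw [hT]
    have hfin : (a^s)⁻¹ * V ≤ M * V := by linarith
    exact le_of_mul_le_mul_right (by linarith [hfin]) hVpos
end

section
/- Let X be uniform on the simplex {x ∈ ℝ_+^N : Σ_e x_e ≤ L} (i.e. α = 1), let 0 ≤ p ≤ L, and let m = |{e : X_e ≤ p}|. Then Var(m) ≤ E[m], i.e. E[m²] - E[m]² ≤ N·(1 - (1-p/L)^N). -/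
open MeasureTheory

def Splx (n : ℕ) (c : ℝ) : Set (Fin n → ℝ) := {x | (∀ e, 0 ≤ x e) ∧ ∑ e, x e ≤ c}

lemma measurableSet_Splx (n : ℕ) (c : ℝ) : MeasurableSet (Splx n c) := by
  have : Splx n c = (⋂ e, {x : Fin n → ℝ | 0 ≤ x e}) ∩ {x | ∑ e, x e ≤ c} := by
    ext x; simp [Splx]
  rw [this]
  exact (MeasurableSet.iInter fun e =>
      measurableSet_le measurable_const (measurable_pi_apply e)).inter
    (measurableSet_le (by fun_prop) measurable_const)

lemma Splx_empty {n : ℕ} {c : ℝ} (hc : c < 0) : Splx n c = ∅ := by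
  ext x
  simp only [Splx, Set.mem_setOf_eq, Set.mem_empty_iff_false, iff_false, not_and]
  intro h hs
  exact absurd (le_trans (Finset.sum_nonneg fun e _ => h e) hs) (not_le.2 hc)

lemma volume_Splx : ∀ (n : ℕ) (c : ℝ), 0 ≤ c →
    volume (Splx n c) = ENNReal.ofReal (c ^ n / n.factorial) := by
  intro n
  induction n with
  | zero =>
    intro c hc
    have : Splx 0 c = Set.univ := by
      ext x; simp [Splx, hc]
    rw [this, volume_pi, Measure.pi_univ]
    simp
  | succ n ih =>
    intro c hc
    set e := MeasurableEquiv.piFinSuccAbove (fun _ : Fin (n+1) => ℝ) 0 with he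
    have hmp : MeasurePreserving e volume volume :=
      volume_preserving_piFinSuccAbove (fun _ : Fin (n+1) => ℝ) 0
    set s : Set (ℝ × (Fin n → ℝ)) :=
      {q | 0 ≤ q.1 ∧ (∀ j, 0 ≤ q.2 j) ∧ q.1 + ∑ j, q.2 j ≤ c} with hs
    have hsm : MeasurableSet s := by
      have h1 : MeasurableSet {q : ℝ × (Fin n → ℝ) | 0 ≤ q.1} :=
        measurableSet_le measurable_const measurable_fst
      have h2 : ∀ j : Fin n, MeasurableSet {q : ℝ × (Fin n → ℝ) | 0 ≤ q.2 j} := fun j =>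
        measurableSet_le measurable_const measurable_snd.eval
      have h3 : MeasurableSet {q : ℝ × (Fin n → ℝ) | q.1 + ∑ j, q.2 j ≤ c} :=
        measurableSet_le (measurable_fst.add
          (Finset.measurable_sum Finset.univ fun j _ => measurable_snd.eval)) measurable_const
      have hse : s = {q : ℝ × (Fin n → ℝ) | 0 ≤ q.1} ∩
          ((⋂ j, {q : ℝ × (Fin n → ℝ) | 0 ≤ q.2 j}) ∩
            {q : ℝ × (Fin n → ℝ) | q.1 + ∑ j, q.2 j ≤ c}) := by
        ext q; simp [hs]
      rw [hse]
      exact h1.inter ((MeasurableSet.iInter h2).inter h3)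
    have hpre : e ⁻¹' s = Splx (n+1) c := by
      ext x
      simp only [Set.mem_preimage, hs, Set.mem_setOf_eq, he,
        MeasurableEquiv.piFinSuccAbove_apply, Splx]
      rw [Fin.forall_fin_succ, Fin.sum_univ_succ]
      simp [Fin.removeNth, Fin.tail, and_assoc]
    have hvol : volume (Splx (n+1) c) = (volume.prod volume) s := by
      rw [← hpre]
      exact hmp.measure_preimage hsm.nullMeasurableSet
    rw [hvol, Measure.prod_apply hsm]
    have hslice : ∀ t : ℝ, volume (Prod.mk t ⁻¹' s) =
        Set.indicator (Set.Icc 0 c) (fun t => ENNReal.ofReal ((c - t) ^ n / n.factorial)) t := by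
      intro t
      by_cases ht : t ∈ Set.Icc 0 c
      · rw [Set.indicator_of_mem ht]
        have : Prod.mk t ⁻¹' s = Splx n (c - t) := by
          ext y
          simp only [Set.mem_preimage, hs, Set.mem_setOf_eq, Splx]
          constructor
          · rintro ⟨_, h1, h2⟩; exact ⟨h1, by linarith⟩
          · rintro ⟨h1, h2⟩; exact ⟨ht.1, h1, by linarith⟩
        rw [this, ih (c - t) (by linarith [ht.2])]
      · rw [Set.indicator_of_notMem ht]
        have : Prod.mk t ⁻¹' s = ∅ := by
          ext y
          simp only [Set.mem_preimage, hs, Set.mem_setOf_eq, Set.mem_empty_iff_false, iff_false]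
          rintro ⟨h0, h1, h2⟩
          have : t ≤ c := by
            have := Finset.sum_nonneg (fun j (_ : j ∈ Finset.univ) => h1 j)
            linarith
          exact ht ⟨h0, this⟩
        simp [this]
    calc ∫⁻ t, volume (Prod.mk t ⁻¹' s)
        = ∫⁻ t, Set.indicator (Set.Icc 0 c)
            (fun t => ENNReal.ofReal ((c - t) ^ n / n.factorial)) t := by
          exact lintegral_congr hslice
      _ = ∫⁻ t in Set.Icc 0 c, ENNReal.ofReal ((c - t) ^ n / n.factorial) := by
          exact lintegral_indicator measurableSet_Icc _
      _ = ENNReal.ofReal (∫ t in Set.Icc 0 c, (c - t) ^ n / n.factorial) := by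
          rw [← ofReal_integral_eq_lintegral_ofReal]
          · exact (Continuous.integrableOn_Icc (by fun_prop))
          · filter_upwards [ae_restrict_mem measurableSet_Icc] with t ht
            have : 0 ≤ c - t := by linarith [ht.2]
            positivity
      _ = ENNReal.ofReal (c ^ (n+1) / (n+1).factorial) := by
          congr 1
          rw [MeasureTheory.integral_Icc_eq_integral_Ioc,
            ← intervalIntegral.integral_of_le hc]
          have h1 : (∫ t in (0:ℝ)..c, (c - t) ^ n / n.factorial)
              = (∫ t in (0:ℝ)..c, (c - t) ^ n) / n.factorial := by
            simp [intervalIntegral.integral_div]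
          rw [h1, intervalIntegral.integral_comp_sub_left (fun u => u ^ n) c]
          simp only [sub_zero, sub_self]
          rw [integral_pow]
          have h2 : ((n:ℝ)+1) ≠ 0 := by positivity
          have h3 : ((n.factorial : ℝ)) ≠ 0 := by positivity
          field_simp [Nat.factorial_succ]
          rw [zero_pow (Nat.succ_ne_zero n), sub_zero, Nat.factorial_succ]; push_cast; ring

lemma volume_shift (n : ℕ) (a : Fin n → ℝ) (c : ℝ) :
    volume {x : Fin n → ℝ | (∀ e, a e ≤ x e) ∧ ∑ e, x e ≤ c}
      = volume (Splx n (c - ∑ e, a e)) := by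
  have h : {x : Fin n → ℝ | (∀ e, a e ≤ x e) ∧ ∑ e, x e ≤ c}
      = (fun x => x + (-a)) ⁻¹' (Splx n (c - ∑ e, a e)) := by
    ext x
    have hsum : ∑ e, (x e + (-a) e) = ∑ e, x e - ∑ e, a e := by
      rw [Finset.sum_add_distrib]
      simp [sub_eq_add_neg]
    simp only [Set.mem_preimage, Set.mem_setOf_eq, Splx, Pi.add_apply]
    rw [hsum]
    constructor
    · rintro ⟨h1, h2⟩
      exact ⟨fun e => by have := h1 e; simp; linarith, by linarith⟩
    · rintro ⟨h1, h2⟩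
      exact ⟨fun e => by have := h1 e; simp at this; linarith, by linarith⟩
  rw [h, measure_preimage_add_right]

lemma volume_Tset (n : ℕ) (c p : ℝ) (hp : 0 ≤ p) (s : Finset (Fin n)) :
    volume {x : Fin n → ℝ | (∀ e, 0 ≤ x e) ∧ (∀ e ∈ s, p ≤ x e) ∧ ∑ e, x e ≤ c}
      = volume (Splx n (c - s.card * p)) := by
  set a : Fin n → ℝ := fun e => if e ∈ s then p else 0 with ha
  have hsa : ∑ e, a e = s.card * p := by
    rw [ha]
    simp only [Finset.sum_ite_mem, Finset.univ_inter, Finset.sum_const, nsmul_eq_mul]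
  have h : {x : Fin n → ℝ | (∀ e, 0 ≤ x e) ∧ (∀ e ∈ s, p ≤ x e) ∧ ∑ e, x e ≤ c}
      = {x : Fin n → ℝ | (∀ e, a e ≤ x e) ∧ ∑ e, x e ≤ c} := by
    ext x
    simp only [Set.mem_setOf_eq, ha]
    constructor
    · rintro ⟨h1, h2, h3⟩
      refine ⟨fun e => ?_, h3⟩
      by_cases he : e ∈ s <;> simp [he]
      exacts [h2 e he, h1 e]
    · rintro ⟨h1, h2⟩
      refine ⟨fun e => ?_, fun e he => ?_, h2⟩
      · by_cases he : e ∈ s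
        · have := h1 e; simp [he] at this; linarith
        · have := h1 e; simpa [he] using this
      · have := h1 e; simpa [he] using this
  rw [h, volume_shift, hsa]

lemma volume_hyperplane (n : ℕ) (e : Fin n) (p : ℝ) :
    volume {x : Fin n → ℝ | x e = p} = 0 := by
  rw [volume_pi]
  exact MeasureTheory.Measure.pi_hyperplane (fun _ => (volume : Measure ℝ)) e p

lemma volume_Uset (n : ℕ) (c p : ℝ) (hp : 0 ≤ p) (s : Finset (Fin n)) :
    volume {x : Fin n → ℝ | x ∈ Splx n c ∧ ∀ e ∈ s, p < x e}
      = volume (Splx n (c - s.card * p)) := by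
  rw [← volume_Tset n c p hp s]
  apply le_antisymm
  · apply measure_mono
    rintro x ⟨⟨h1, h2⟩, h3⟩
    exact ⟨h1, fun e he => le_of_lt (h3 e he), h2⟩
  · have hnull : volume (⋃ e ∈ s, {x : Fin n → ℝ | x e = p}) = 0 := by
      refine measure_biUnion_null_iff s.countable_toSet |>.2 fun e _ => ?_
      exact volume_hyperplane n e p
    calc volume {x : Fin n → ℝ | (∀ e, 0 ≤ x e) ∧ (∀ e ∈ s, p ≤ x e) ∧ ∑ e, x e ≤ c}
        ≤ volume ({x : Fin n → ℝ | x ∈ Splx n c ∧ ∀ e ∈ s, p < x e}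
            ∪ ⋃ e ∈ s, {x : Fin n → ℝ | x e = p}) := by
          apply measure_mono
          rintro x ⟨h1, h2, h3⟩
          by_cases hx : ∀ e ∈ s, p < x e
          · exact Or.inl ⟨⟨h1, h3⟩, hx⟩
          · push_neg at hx
            obtain ⟨e, he, hle⟩ := hx
            exact Or.inr (Set.mem_biUnion he (le_antisymm hle (h2 e he)))
      _ ≤ volume {x : Fin n → ℝ | x ∈ Splx n c ∧ ∀ e ∈ s, p < x e}
            + volume (⋃ e ∈ s, {x : Fin n → ℝ | x e = p}) := measure_union_le _ _
      _ = volume {x : Fin n → ℝ | x ∈ Splx n c ∧ ∀ e ∈ s, p < x e} := by rw [hnull, add_zero]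

lemma integral_indicator_one {α : Type*} [MeasurableSpace α] (μ : Measure α) (S B : Set α)
    (hB : MeasurableSet B) :
    ∫ x in S, B.indicator (fun _ => (1:ℝ)) x ∂μ = (μ (S ∩ B)).toReal := by
  rw [setIntegral_indicator hB, setIntegral_const, smul_eq_mul, mul_one]
  rfl

lemma integrableOn_indicator_one {α : Type*} [MeasurableSpace α] (μ : Measure α) (S B : Set α)
    (hB : MeasurableSet B) (hS : μ S ≠ ⊤) :
    IntegrableOn (B.indicator (fun _ => (1:ℝ))) S μ := by
  apply Integrable.indicator _ hB
  exact integrableOn_const hS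

lemma final_ineq (r V v1 v2 : ℝ) (hr : 2 ≤ r) (hV : 0 < V) (h1 : 0 ≤ v1) (h1V : v1 ≤ V)
    (h2 : 0 ≤ v2) (hkey : v2 * V ≤ v1 ^ 2) :
    (r*(V-v1) + r*(r-1)*(V-2*v1+v2))/V - (r*(V-v1)/V)^2 ≤ r*(1 - v1/V) := by
  have hV2 : (0:ℝ) < V^2 := by positivity
  have e1 : (r*(V-v1) + r*(r-1)*(V-2*v1+v2))/V - (r*(V-v1)/V)^2
      = (r*(V-v1)*V + r*(r-1)*(V-2*v1+v2)*V - (r*(V-v1))^2)/V^2 := by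
    field_simp
  have e2 : r*(1 - v1/V) = (r*(V-v1)*V)/V^2 := by
    field_simp
  rw [e1, e2, div_le_div_iff₀ hV2 hV2]
  have hXY : (V-2*v1+v2)*V ≤ (V-v1)^2 := by nlinarith
  have h0 : (0:ℝ) ≤ r*(r-1) := by nlinarith
  nlinarith [mul_le_mul_of_nonneg_left hXY h0,
    mul_nonneg (by linarith : (0:ℝ) ≤ r) (sq_nonneg (V-v1)), hV2]

/-- for `X` uniform on `{x ∈ ℝ_+^N : ∑ x_e ≤ L}` and
`m = #{e : X_e ≤ p}` with `0 ≤ p ≤ L`, `Var(m) ≤ E[m] = N(1-(1-p/L)^N)`. -/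
theorem stmt11 (N : ℕ) (hN : 2 ≤ N) (L p : ℝ) (hL : 0 < L)
    (hp0 : 0 ≤ p) (hpL : p ≤ L) :
    (∫ x in {x : Fin N → ℝ | (∀ e, 0 ≤ x e) ∧ ∑ e, x e ≤ L},
        ((Finset.univ.filter (fun e : Fin N => x e ≤ p)).card : ℝ) ^ 2) /
      (volume {x : Fin N → ℝ | (∀ e, 0 ≤ x e) ∧ ∑ e, x e ≤ L}).toReal
    - ((∫ x in {x : Fin N → ℝ | (∀ e, 0 ≤ x e) ∧ ∑ e, x e ≤ L},
        ((Finset.univ.filter (fun e : Fin N => x e ≤ p)).card : ℝ)) /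
      (volume {x : Fin N → ℝ | (∀ e, 0 ≤ x e) ∧ ∑ e, x e ≤ L}).toReal) ^ 2
    ≤ N * (1 - (1 - p / L) ^ N) := by
  have hSet : {x : Fin N → ℝ | (∀ e, 0 ≤ x e) ∧ ∑ e, x e ≤ L} = Splx N L := rfl
  rw [hSet]
  have hN1 : 1 ≤ N := le_trans (by norm_num) hN
  set V : ℝ := L ^ N / N.factorial with hVdef
  set v1 : ℝ := (L - p) ^ N / N.factorial with hv1def
  set v2 : ℝ := (max (L - 2*p) 0) ^ N / N.factorial with hv2def
  have hNfac : (0:ℝ) < N.factorial := by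
    exact_mod_cast Nat.factorial_pos N
  have hVpos : 0 < V := by
    apply div_pos (pow_pos hL N) hNfac
  have hv1nn : 0 ≤ v1 := by
    apply div_nonneg (pow_nonneg (by linarith) N) hNfac.le
  have hv2nn : 0 ≤ v2 := by
    apply div_nonneg (pow_nonneg (le_max_right _ _) N) hNfac.le
  have hv1V : v1 ≤ V := by
    rw [hv1def, hVdef]
    gcongr
    · linarith
  have hvolS : volume (Splx N L) = ENNReal.ofReal V := volume_Splx N L hL.le
  have htoS : (volume (Splx N L)).toReal = V := by
    rw [hvolS, ENNReal.toReal_ofReal hVpos.le]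
  have hfinS : volume (Splx N L) ≠ ⊤ := by rw [hvolS]; exact ENNReal.ofReal_ne_top
  have hBmeas : ∀ e : Fin N, MeasurableSet {x : Fin N → ℝ | x e ≤ p} := fun e =>
    measurableSet_le (measurable_pi_apply e) measurable_const
  have hSmeas := measurableSet_Splx N L
  have hUe : ∀ e : Fin N, volume {x : Fin N → ℝ | x ∈ Splx N L ∧ p < x e}
      = ENNReal.ofReal v1 := by
    intro e
    have h := volume_Uset N L p hp0 {e}
    have hset : {x : Fin N → ℝ | x ∈ Splx N L ∧ ∀ e' ∈ ({e} : Finset (Fin N)), p < x e'}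
        = {x : Fin N → ℝ | x ∈ Splx N L ∧ p < x e} := by
      ext x; simp
    rw [hset] at h
    rw [h, show L - ((({e} : Finset (Fin N)).card : ℝ)) * p = L - p by simp,
      volume_Splx N (L - p) (by linarith)]
  have hvol2 : volume (Splx N (L - 2 * p)) = ENNReal.ofReal v2 := by
    rcases le_or_gt 0 (L - 2*p) with h | h
    · rw [volume_Splx N _ h, hv2def, max_eq_left h]
    · rw [Splx_empty h]
      rw [hv2def, max_eq_right h.le, zero_pow (by omega : N ≠ 0)]
      simp
  have hUef : ∀ e f : Fin N, e ≠ f →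
      volume {x : Fin N → ℝ | x ∈ Splx N L ∧ (p < x e ∧ p < x f)} = ENNReal.ofReal v2 := by
    intro e f hef
    have h := volume_Uset N L p hp0 {e, f}
    have hset : {x : Fin N → ℝ | x ∈ Splx N L ∧ ∀ e' ∈ ({e, f} : Finset (Fin N)), p < x e'}
        = {x : Fin N → ℝ | x ∈ Splx N L ∧ (p < x e ∧ p < x f)} := by
      ext x; simp [Finset.mem_insert]
    rw [hset] at h
    rw [h, show L - ((({e, f} : Finset (Fin N)).card : ℝ)) * p = L - 2*p by
      rw [Finset.card_insert_of_notMem (by simpa using hef), Finset.card_singleton]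
      push_cast; ring, hvol2]
  have hA1 : ∀ e : Fin N, (volume (Splx N L ∩ {x | x e ≤ p})).toReal = V - v1 := by
    intro e
    have hdiff : Splx N L \ {x | x e ≤ p} = {x | x ∈ Splx N L ∧ p < x e} := by
      ext x; simp [Set.mem_diff, not_le]
    have h := measure_inter_add_diff (μ := volume) (Splx N L) (hBmeas e)
    rw [hdiff, hUe e, hvolS] at h
    have hfin1 : volume (Splx N L ∩ {x : Fin N → ℝ | x e ≤ p}) ≠ ⊤ :=
      ne_top_of_le_ne_top hfinS (measure_mono Set.inter_subset_left)
    have h2 := congrArg ENNReal.toReal h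
    rw [ENNReal.toReal_add hfin1 ENNReal.ofReal_ne_top, ENNReal.toReal_ofReal hv1nn,
      ENNReal.toReal_ofReal hVpos.le] at h2
    linarith
  have hA2 : ∀ e f : Fin N, e ≠ f →
      (volume (Splx N L ∩ ({x | x e ≤ p} ∩ {x | x f ≤ p}))).toReal = V - 2*v1 + v2 := by
    intro e f hef
    have hdiff : Splx N L \ ({x | x e ≤ p} ∩ {x | x f ≤ p})
        = {x | x ∈ Splx N L ∧ p < x e} ∪ {x | x ∈ Splx N L ∧ p < x f} := by
      ext x
      simp only [Set.mem_diff, Set.mem_inter_iff, Set.mem_setOf_eq, Set.mem_union,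
        not_and_or, not_le]
      tauto
    have hUmeas : MeasurableSet {x : Fin N → ℝ | x ∈ Splx N L ∧ p < x f} := by
      rw [show {x : Fin N → ℝ | x ∈ Splx N L ∧ p < x f} = Splx N L \ {x | x f ≤ p} from by
        ext x; simp [not_le]]
      exact hSmeas.diff (hBmeas f)
    have hinter : {x : Fin N → ℝ | x ∈ Splx N L ∧ p < x e} ∩ {x | x ∈ Splx N L ∧ p < x f}
        = {x | x ∈ Splx N L ∧ (p < x e ∧ p < x f)} := by
      ext x; simp only [Set.mem_inter_iff, Set.mem_setOf_eq]; tauto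
    have hu := measure_union_add_inter (μ := volume) {x : Fin N → ℝ | x ∈ Splx N L ∧ p < x e} hUmeas
    rw [hinter, hUe e, hUe f, hUef e f hef] at hu
    have h := measure_inter_add_diff (μ := volume) (Splx N L) ((hBmeas e).inter (hBmeas f))
    rw [hdiff, hvolS] at h
    have hfinI : volume (Splx N L ∩ ({x : Fin N → ℝ | x e ≤ p} ∩ {x | x f ≤ p})) ≠ ⊤ :=
      ne_top_of_le_ne_top hfinS (measure_mono Set.inter_subset_left)
    have hfinU : volume ({x : Fin N → ℝ | x ∈ Splx N L ∧ p < x e}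
        ∪ {x | x ∈ Splx N L ∧ p < x f}) ≠ ⊤ := by
      apply ne_top_of_le_ne_top hfinS (measure_mono ?_)
      rintro x (⟨hx, _⟩ | ⟨hx, _⟩) <;> exact hx
    have h2 := congrArg ENNReal.toReal h
    rw [ENNReal.toReal_add hfinI hfinU, ENNReal.toReal_ofReal hVpos.le] at h2
    have hu2 := congrArg ENNReal.toReal hu
    rw [ENNReal.toReal_add hfinU ENNReal.ofReal_ne_top,
      ENNReal.toReal_add ENNReal.ofReal_ne_top ENNReal.ofReal_ne_top,
      ENNReal.toReal_ofReal hv1nn, ENNReal.toReal_ofReal hv2nn] at hu2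
    linarith
  have hcast : ∀ x : Fin N → ℝ, ((Finset.univ.filter (fun e : Fin N => x e ≤ p)).card : ℝ)
      = ∑ e : Fin N, Set.indicator {y : Fin N → ℝ | y e ≤ p} (fun _ => (1:ℝ)) x := by
    intro x
    rw [Finset.card_filter, Nat.cast_sum]
    apply Finset.sum_congr rfl
    intro e _
    by_cases h : x e ≤ p <;> simp [Set.indicator_apply, h]
  have hI1 : (∫ x in Splx N L, ((Finset.univ.filter (fun e : Fin N => x e ≤ p)).card : ℝ))
      = (N:ℝ) * (V - v1) := by
    calc (∫ x in Splx N L, ((Finset.univ.filter (fun e : Fin N => x e ≤ p)).card : ℝ))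
        = ∫ x in Splx N L, ∑ e : Fin N,
            Set.indicator {y : Fin N → ℝ | y e ≤ p} (fun _ => (1:ℝ)) x := by
          apply integral_congr_ae; filter_upwards with x; exact hcast x
      _ = ∑ e : Fin N, ∫ x in Splx N L,
            Set.indicator {y : Fin N → ℝ | y e ≤ p} (fun _ => (1:ℝ)) x := by
          apply integral_finset_sum
          intro e _
          exact integrableOn_indicator_one volume _ _ (hBmeas e) hfinS
      _ = ∑ e : Fin N, (V - v1) := by
          apply Finset.sum_congr rfl
          intro e _
          rw [integral_indicator_one volume _ _ (hBmeas e), hA1 e]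
      _ = (N:ℝ) * (V - v1) := by
          rw [Finset.sum_const, Finset.card_univ, Fintype.card_fin, nsmul_eq_mul]
  have hcast2 : ∀ x : Fin N → ℝ, ((Finset.univ.filter (fun e : Fin N => x e ≤ p)).card : ℝ)^2
      = ∑ e : Fin N, ∑ f : Fin N,
          Set.indicator ({y : Fin N → ℝ | y e ≤ p} ∩ {y | y f ≤ p}) (fun _ => (1:ℝ)) x := by
    intro x
    rw [hcast x, sq, Finset.sum_mul_sum]
    apply Finset.sum_congr rfl; intro e _
    apply Finset.sum_congr rfl; intro f _
    by_cases h1 : x e ≤ p <;> by_cases h2 : x f ≤ p <;>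
      simp [Set.indicator_apply, h1, h2]
  have hI2 : (∫ x in Splx N L, ((Finset.univ.filter (fun e : Fin N => x e ≤ p)).card : ℝ)^2)
      = (N:ℝ) * (V - v1) + (N:ℝ) * ((N:ℝ)-1) * (V - 2*v1 + v2) := by
    calc (∫ x in Splx N L, ((Finset.univ.filter (fun e : Fin N => x e ≤ p)).card : ℝ)^2)
        = ∫ x in Splx N L, ∑ e : Fin N, ∑ f : Fin N,
            Set.indicator ({y : Fin N → ℝ | y e ≤ p} ∩ {y | y f ≤ p}) (fun _ => (1:ℝ)) x := by
          apply integral_congr_ae; filter_upwards with x; exact hcast2 x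
      _ = ∑ e : Fin N, ∑ f : Fin N, ∫ x in Splx N L,
            Set.indicator ({y : Fin N → ℝ | y e ≤ p} ∩ {y | y f ≤ p}) (fun _ => (1:ℝ)) x := by
          rw [integral_finset_sum]
          · apply Finset.sum_congr rfl; intro e _
            apply integral_finset_sum
            intro f _
            exact integrableOn_indicator_one volume _ _ ((hBmeas e).inter (hBmeas f)) hfinS
          · intro e _
            exact integrable_finset_sum _ fun f _ =>
              integrableOn_indicator_one volume _ _ ((hBmeas e).inter (hBmeas f)) hfinS
      _ = ∑ e : Fin N, ∑ f : Fin N, (if e = f then V - v1 else V - 2*v1 + v2) := by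
          apply Finset.sum_congr rfl; intro e _
          apply Finset.sum_congr rfl; intro f _
          rw [integral_indicator_one volume _ _ ((hBmeas e).inter (hBmeas f))]
          by_cases h : e = f
          · subst h; rw [if_pos rfl, Set.inter_self]; exact hA1 e
          · rw [if_neg h]; exact hA2 e f h
      _ = (N:ℝ) * (V - v1) + (N:ℝ) * ((N:ℝ)-1) * (V - 2*v1 + v2) := by
          have hrow : ∀ e : Fin N, (∑ f : Fin N, (if e = f then V - v1 else V - 2*v1 + v2))
              = (V - v1) + ((N:ℝ)-1) * (V - 2*v1 + v2) := by
            intro e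
            have hsplit : ∀ f : Fin N, (if e = f then V - v1 else V - 2*v1 + v2)
                = (if e = f then (V - v1) - (V - 2*v1 + v2) else 0) + (V - 2*v1 + v2) := by
              intro f; by_cases h : e = f <;> simp [h]
            rw [Finset.sum_congr rfl (fun f _ => hsplit f), Finset.sum_add_distrib,
              Finset.sum_ite_eq, if_pos (Finset.mem_univ e), Finset.sum_const,
              Finset.card_univ, Fintype.card_fin, nsmul_eq_mul]
            ring
          rw [Finset.sum_congr rfl (fun e _ => hrow e), Finset.sum_const, Finset.card_univ,
            Fintype.card_fin, nsmul_eq_mul]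
          ring
  rw [hI1, hI2, htoS]
  have hrw : (1 - p / L) ^ N = v1 / V := by
    rw [show (1 - p / L) = (L - p)/L from by field_simp, div_pow, hv1def, hVdef,
      div_div_div_comm, div_self hNfac.ne', div_one]
  rw [hrw]
  have hkey : v2 * V ≤ v1 ^ 2 := by
    rw [hv2def, hVdef, hv1def, div_mul_div_comm, div_pow,
      show (((L-p))^N)^2 = ((L-p)^2)^N from by rw [← pow_mul, ← pow_mul, mul_comm],
      show ((N.factorial:ℝ))^2 = (N.factorial:ℝ) * N.factorial from sq (N.factorial:ℝ)]
    gcongr ?_ / _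
    rw [← mul_pow]
    apply pow_le_pow_left₀ (mul_nonneg (le_max_right _ _) hL.le)
    rcases max_cases (L-2*p) 0 with ⟨h,_⟩|⟨h,_⟩ <;> rw [h] <;> nlinarith
  exact final_ineq (N:ℝ) V v1 v2 (by exact_mod_cast hN) hVpos hv1nn hv1V hv2nn hkey
end
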